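/- arXiv:1503.07063 — 6 statements merged into one kernel-verified Lean document; each statement's English description precedes it below -/
import Mathlib

section
/- Let c be the Coulomb cost on (ℝ³)^N. There exists a nondecreasing sequence of functions c_n : (ℝ³)^N → [0,∞) such that each c_n is lower semicontinuous, permutation invariant, satisfies 0 ≤ c_n ≤ c, takes only finitely many values with each level set a finite union of products of Borel subsets of ℝ³ (i.e. c_n is an elementary function), and c_n converges pointwise monotonically upward to c. -/
open MeasureTheory Filter Topology
open scoped ENNReal

noncomputable section

abbrev E3 := EuclideanSpace ℝ (Fin 3)

/-- The Coulomb cost on (ℝ³)^N, with value +∞ when two coordinates coincide. -/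
def coulomb (N : ℕ) (x : Fin N → E3) : ℝ≥0∞ :=
  ∑ p ∈ Finset.univ.filter (fun p : Fin N × Fin N => p.1 < p.2),
    (ENNReal.ofReal (dist (x p.1) (x p.2)))⁻¹

/-- An elementary function on (ℝ³)^N: a finite linear combination of characteristic
functions of products of Borel sets. -/
def Elementary (N : ℕ) (f : (Fin N → E3) → ℝ) : Prop :=
  ∃ (k : ℕ) (a : Fin k → ℝ) (A : Fin k → Fin N → Set E3),
    (∀ i j, MeasurableSet (A i j)) ∧
    ∀ x, f x = ∑ i, a i * ∏ j, Set.indicator (A i j) (fun _ => (1 : ℝ)) (x j)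

/-! ### Auxiliary lemmas about `Elementary` -/

section ElementaryAlgebra

variable {N : ℕ}

lemma elem_congr {f g : (Fin N → E3) → ℝ} (h : ∀ x, f x = g x)
    (hg : Elementary N g) : Elementary N f := by
  obtain ⟨k, a, A, hm, hrep⟩ := hg
  exact ⟨k, a, A, hm, fun x => (h x).trans (hrep x)⟩

lemma elem_const (N : ℕ) (c : ℝ) : Elementary N (fun _ => c) := by
  refine ⟨1, fun _ => c, fun _ _ => Set.univ, fun _ _ => MeasurableSet.univ, fun x => ?_⟩
  simp

lemma elem_add {f g : (Fin N → E3) → ℝ} (hf : Elementary N f) (hg : Elementary N g) :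
    Elementary N (fun x => f x + g x) := by
  obtain ⟨k1, a1, A1, m1, h1⟩ := hf
  obtain ⟨k2, a2, A2, m2, h2⟩ := hg
  refine ⟨k1 + k2, Fin.append a1 a2, Fin.append A1 A2, ?_, ?_⟩
  · intro i j
    induction i using Fin.addCases with
    | left i => simpa [Fin.append_left] using m1 i j
    | right i => simpa [Fin.append_right] using m2 i j
  · intro x
    show f x + g x = _
    rw [h1, h2, Fin.sum_univ_add]
    congr 1 <;> refine Finset.sum_congr rfl fun i _ => ?_ <;>
      simp [Fin.append_left, Fin.append_right]

lemma ind_inter (A B : Set E3) (t : E3) :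
    Set.indicator A (fun _ => (1 : ℝ)) t * Set.indicator B (fun _ => (1 : ℝ)) t
      = Set.indicator (A ∩ B) (fun _ => (1 : ℝ)) t := by
  by_cases h1 : t ∈ A <;> by_cases h2 : t ∈ B <;>
    simp [Set.indicator_apply, h1, h2]

lemma elem_mul {f g : (Fin N → E3) → ℝ} (hf : Elementary N f) (hg : Elementary N g) :
    Elementary N (fun x => f x * g x) := by
  obtain ⟨k1, a1, A1, m1, h1⟩ := hf
  obtain ⟨k2, a2, A2, m2, h2⟩ := hg
  refine ⟨k1 * k2,
    fun i => a1 (finProdFinEquiv.symm i).1 * a2 (finProdFinEquiv.symm i).2,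
    fun i j => A1 (finProdFinEquiv.symm i).1 j ∩ A2 (finProdFinEquiv.symm i).2 j,
    fun i j => (m1 _ j).inter (m2 _ j), fun x => ?_⟩
  rw [← Equiv.sum_comp finProdFinEquiv
    (fun i => (a1 (finProdFinEquiv.symm i).1 * a2 (finProdFinEquiv.symm i).2) *
      ∏ j, Set.indicator (A1 (finProdFinEquiv.symm i).1 j ∩ A2 (finProdFinEquiv.symm i).2 j)
        (fun _ => (1 : ℝ)) (x j))]
  simp only [Equiv.symm_apply_apply]
  rw [h1, h2, Finset.sum_mul_sum, Fintype.sum_prod_type]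
  refine Finset.sum_congr rfl fun i1 _ => Finset.sum_congr rfl fun i2 _ => ?_
  rw [mul_mul_mul_comm, ← Finset.prod_mul_distrib]
  congr 1
  exact Finset.prod_congr rfl fun j _ => ind_inter _ _ _

lemma elem_sum {ι : Type*} (s : Finset ι) (F : ι → (Fin N → E3) → ℝ)
    (h : ∀ i ∈ s, Elementary N (F i)) :
    Elementary N (fun x => ∑ i ∈ s, F i x) := by
  classical
  induction s using Finset.cons_induction with
  | empty => simpa using elem_const N 0
  | cons a s ha ih =>
    simp only [Finset.sum_cons]
    exact elem_add (h a (Finset.mem_cons_self a s))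
      (ih fun i hi => h i (Finset.mem_cons_of_mem hi))

lemma elem_prod {ι : Type*} (s : Finset ι) (F : ι → (Fin N → E3) → ℝ)
    (h : ∀ i ∈ s, Elementary N (F i)) :
    Elementary N (fun x => ∏ i ∈ s, F i x) := by
  classical
  induction s using Finset.cons_induction with
  | empty => simpa using elem_const N 1
  | cons a s ha ih =>
    simp only [Finset.prod_cons]
    exact elem_mul (h a (Finset.mem_cons_self a s))
      (ih fun i hi => h i (Finset.mem_cons_of_mem hi))

lemma elem_finrange {f : (Fin N → E3) → ℝ} (hf : Elementary N f) :
    ∃ V : Finset ℝ, ∀ x, f x ∈ V := by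
  classical
  obtain ⟨k, a, A, -, h⟩ := hf
  refine ⟨Finset.image (fun s : Finset (Fin k) => ∑ i ∈ s, a i) Finset.univ, fun x => ?_⟩
  set P : Fin k → ℝ := fun i => ∏ j, Set.indicator (A i j) (fun _ => (1 : ℝ)) (x j) with hP
  have hP01 : ∀ i, P i = 0 ∨ P i = 1 := by
    intro i
    by_cases hall : ∀ j, x j ∈ A i j
    · exact Or.inr (Finset.prod_eq_one fun j _ => by simp [Set.indicator_of_mem (hall j)])
    · push_neg at hall
      obtain ⟨j, hj⟩ := hall
      exact Or.inl (Finset.prod_eq_zero (Finset.mem_univ j)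
        (by simp [Set.indicator_of_notMem hj]))
  rw [h x]
  refine Finset.mem_image.2 ⟨Finset.univ.filter (fun i => P i = 1), Finset.mem_univ _, ?_⟩
  rw [Finset.sum_filter]
  refine Finset.sum_congr rfl fun i _ => ?_
  rcases hP01 i with h0 | h1
  · simp [hP] at h0 ⊢
    simp [h0]
  · simp [hP] at h1 ⊢
    simp [h1]

lemma elem_comp {f : (Fin N → E3) → ℝ} (φ : ℝ → ℝ) (hf : Elementary N f) :
    Elementary N (fun x => φ (f x)) := by
  classical
  obtain ⟨V, hV⟩ := elem_finrange hf
  have key : ∀ x, φ (f x)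
      = ∑ a ∈ V, φ a * ∏ b ∈ V.erase a, ((f x - b) * (a - b)⁻¹) := by
    intro x
    rw [Finset.sum_eq_single_of_mem (f x) (hV x)]
    · have : ∏ b ∈ V.erase (f x), ((f x - b) * (f x - b)⁻¹) = 1 := by
        refine Finset.prod_eq_one fun b hb => ?_
        have hb' : b ≠ f x := Finset.ne_of_mem_erase hb
        exact mul_inv_cancel₀ (sub_ne_zero.2 (Ne.symm hb'))
      rw [this, mul_one]
    · intro a ha hne
      have hmem : f x ∈ V.erase a := Finset.mem_erase.2 ⟨hne.symm, hV x⟩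
      have : ∏ b ∈ V.erase a, ((f x - b) * (a - b)⁻¹) = 0 :=
        Finset.prod_eq_zero hmem (by simp)
      rw [this, mul_zero]
  refine elem_congr key ?_
  refine elem_sum V _ fun a _ => ?_
  refine elem_mul (elem_const N (φ a)) ?_
  refine elem_prod (V.erase a) _ fun b _ => ?_
  refine elem_mul ?_ (elem_const N ((a - b)⁻¹))
  refine elem_congr (fun x => sub_eq_add_neg (f x) b) ?_
  exact elem_add hf (elem_const N (-b))

lemma elem_max {f g : (Fin N → E3) → ℝ} (hf : Elementary N f) (hg : Elementary N g) :
    Elementary N (fun x => max (f x) (g x)) := by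
  have hd : Elementary N (fun x => g x - f x) := by
    refine elem_congr (fun x => sub_eq_add_neg (g x) (f x)) ?_
    refine elem_add hg ?_
    refine elem_congr (fun x => (neg_one_mul (f x)).symm) ?_
    exact elem_mul (elem_const N (-1)) hf
  have hc : Elementary N (fun x => max (g x - f x) 0) :=
    elem_comp (fun t => max t 0) hd
  refine elem_congr (fun x => ?_) (elem_add hf hc)
  rcases le_total (f x) (g x) with h | h
  · rw [max_eq_right h, max_eq_left (sub_nonneg.2 h)]; ring
  · rw [max_eq_left h, max_eq_right (sub_nonpos.2 h)]; ring

lemma elem_sup' {ι : Type*} (s : Finset ι) (hs : s.Nonempty) (F : ι → (Fin N → E3) → ℝ)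
    (h : ∀ i ∈ s, Elementary N (F i)) :
    Elementary N (fun x => s.sup' hs (fun i => F i x)) := by
  classical
  induction hs using Finset.Nonempty.cons_induction with
  | singleton a => simpa using h a (by simp)
  | cons a s ha hs ih =>
    have hrw : (fun x => (Finset.cons a s ha).sup' (Finset.cons_nonempty ha) (fun i => F i x))
        = fun x => max (F a x) (s.sup' hs (fun i => F i x)) := by
      funext x
      rw [Finset.sup'_cons hs]
    rw [hrw]
    exact elem_max (h a (Finset.mem_cons_self a s))
      (ih fun i hi => h i (Finset.mem_cons_of_mem hi))

end ElementaryAlgebra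

/-! ### Lower semicontinuity helpers -/

lemma lsc_max {α : Type*} [TopologicalSpace α] {f g : α → ℝ}
    (hf : LowerSemicontinuous f) (hg : LowerSemicontinuous g) :
    LowerSemicontinuous (fun x => max (f x) (g x)) := by
  intro x t ht
  rcases lt_max_iff.1 ht with h | h
  · filter_upwards [hf x t h] with y hy using lt_max_iff.2 (Or.inl hy)
  · filter_upwards [hg x t h] with y hy using lt_max_iff.2 (Or.inr hy)

lemma lsc_sup' {α ι : Type*} [TopologicalSpace α] (s : Finset ι) (hs : s.Nonempty)
    (F : ι → α → ℝ) (h : ∀ i ∈ s, LowerSemicontinuous (F i)) :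
    LowerSemicontinuous (fun x => s.sup' hs (fun i => F i x)) := by
  classical
  induction hs using Finset.Nonempty.cons_induction with
  | singleton a => simpa using h a (by simp)
  | cons a s ha hs ih =>
    have hrw : (fun x => (Finset.cons a s ha).sup' (Finset.cons_nonempty ha) (fun i => F i x))
        = fun x => max (F a x) (s.sup' hs (fun i => F i x)) := by
      funext x
      rw [Finset.sup'_cons hs]
    rw [hrw]
    exact lsc_max (h a (Finset.mem_cons_self a s))
      (ih fun i hi => h i (Finset.mem_cons_of_mem hi))

/-! ### Properties of the Coulomb cost -/

lemma coulomb_continuous (N : ℕ) : Continuous (coulomb N) := by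
  unfold coulomb
  refine continuous_finset_sum _ fun p _ => ?_
  exact (ENNReal.continuous_ofReal.comp
    ((continuous_apply p.1).dist (continuous_apply p.2))).inv

lemma coulomb_comp_perm (N : ℕ) (σ : Equiv.Perm (Fin N)) (x : Fin N → E3) :
    coulomb N (x ∘ σ) = coulomb N x := by
  classical
  unfold coulomb
  refine Finset.sum_nbij'
    (fun p => if σ p.1 < σ p.2 then (σ p.1, σ p.2) else (σ p.2, σ p.1))
    (fun p => if σ⁻¹ p.1 < σ⁻¹ p.2 then (σ⁻¹ p.1, σ⁻¹ p.2) else (σ⁻¹ p.2, σ⁻¹ p.1))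
    ?_ ?_ ?_ ?_ ?_
  · intro p hp
    rw [Finset.mem_filter] at hp ⊢
    have hne : σ p.1 ≠ σ p.2 := fun h => (ne_of_lt hp.2) (σ.injective h)
    rcases hne.lt_or_gt with h | h <;> simp [h, le_of_lt, not_lt.2 (le_of_lt h)]
  · intro p hp
    rw [Finset.mem_filter] at hp ⊢
    have hne : σ⁻¹ p.1 ≠ σ⁻¹ p.2 := fun h => (ne_of_lt hp.2) (σ⁻¹.injective h)
    rcases hne.lt_or_gt with h | h <;> simp only [Equiv.Perm.inv_def] at h <;> simp [h, le_of_lt, not_lt.2 (le_of_lt h)]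
  · intro p hp
    rw [Finset.mem_filter] at hp
    have hlt := hp.2
    by_cases h : σ p.1 < σ p.2 <;>
      simp [h, hlt, not_lt.2 (le_of_lt hlt)]
  · intro p hp
    rw [Finset.mem_filter] at hp
    have hlt := hp.2
    by_cases h : σ⁻¹ p.1 < σ⁻¹ p.2 <;> simp only [Equiv.Perm.inv_def] at h <;>
      simp [h, hlt, not_lt.2 (le_of_lt hlt)]
  · intro p hp
    by_cases h : σ p.1 < σ p.2 <;> simp [h, Function.comp, dist_comm]

/-! ### The approximating family -/

/-- Parameters: the centers (as indices in a dense sequence), a rational radius and a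
rational value. -/
def PParam (N : ℕ) : Type := (Fin N → ℕ) × ℚ × ℚ

instance (N : ℕ) : Countable (PParam N) := by unfold PParam; infer_instance
instance (N : ℕ) : Nonempty (PParam N) := ⟨⟨fun _ => 0, 0, 0⟩⟩

/-- A dense sequence in `E3`. -/
def dseq : ℕ → E3 := TopologicalSpace.denseSeq E3

lemma dseq_dense : DenseRange dseq := TopologicalSpace.denseRange_denseSeq E3

/-- The product-ball associated to a parameter. -/
def pball (N : ℕ) (p : PParam N) : Fin N → Set E3 :=
  fun j => Metric.ball (dseq (p.1 j)) (p.2.1 : ℝ)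

/-- Validity of a parameter: nonnegative value, dominated by the Coulomb cost on the box. -/
def pvalid (N : ℕ) (p : PParam N) : Prop :=
  0 ≤ p.2.2 ∧ ∀ y : Fin N → E3, (∀ j, y j ∈ pball N p j) →
    ENNReal.ofReal (p.2.2 : ℝ) ≤ coulomb N y

open Classical in
/-- The value of a parameter (zero if invalid). -/
def pval (N : ℕ) (p : PParam N) : ℝ := if pvalid N p then (p.2.2 : ℝ) else 0

lemma pval_nonneg (N : ℕ) (p : PParam N) : 0 ≤ pval N p := by
  unfold pval
  split_ifs with h
  · exact_mod_cast h.1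
  · exact le_refl 0

/-- Enumeration of the parameters. -/
def penum (N : ℕ) : ℕ → PParam N := (exists_surjective_nat (PParam N)).choose

lemma penum_surj (N : ℕ) : Function.Surjective (penum N) :=
  (exists_surjective_nat (PParam N)).choose_spec

/-- The basic bump functions. -/
def gfun (N : ℕ) (p : PParam N) (y : Fin N → E3) : ℝ :=
  pval N p * ∏ j, Set.indicator (pball N p j) (fun _ => (1 : ℝ)) (y j)

lemma gfun_eq_indicator (N : ℕ) (p : PParam N) (y : Fin N → E3) :
    gfun N p y = Set.indicator {z : Fin N → E3 | ∀ j, z j ∈ pball N p j}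
      (fun _ => pval N p) y := by
  classical
  unfold gfun
  by_cases hy : ∀ j, y j ∈ pball N p j
  · have hy' : y ∈ {z : Fin N → E3 | ∀ j, z j ∈ pball N p j} := hy
    rw [Set.indicator_of_mem hy']
    rw [Finset.prod_eq_one fun j _ => by simp [Set.indicator_of_mem (hy j)], mul_one]
  · have hy' : y ∉ {z : Fin N → E3 | ∀ j, z j ∈ pball N p j} := hy
    rw [Set.indicator_of_notMem hy']
    push_neg at hy
    obtain ⟨j, hj⟩ := hy
    rw [Finset.prod_eq_zero (Finset.mem_univ j) (by simp [Set.indicator_of_notMem hj]),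
      mul_zero]

lemma gfun_nonneg (N : ℕ) (p : PParam N) (y : Fin N → E3) : 0 ≤ gfun N p y := by
  rw [gfun_eq_indicator]
  exact Set.indicator_nonneg (fun _ _ => pval_nonneg N p) y

lemma gfun_le (N : ℕ) (p : PParam N) (y : Fin N → E3) :
    ENNReal.ofReal (gfun N p y) ≤ coulomb N y := by
  rw [gfun_eq_indicator]
  by_cases hy : ∀ j, y j ∈ pball N p j
  · have hy' : y ∈ {z : Fin N → E3 | ∀ j, z j ∈ pball N p j} := hy
    rw [Set.indicator_of_mem hy']
    unfold pval
    split_ifs with h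
    · exact h.2 y hy
    · simp
  · have hy' : y ∉ {z : Fin N → E3 | ∀ j, z j ∈ pball N p j} := hy
    rw [Set.indicator_of_notMem hy']; simp

/-- The approximating sequence. -/
def cseq (N : ℕ) (n : ℕ) (x : Fin N → E3) : ℝ :=
  (Finset.range (n + 1) ×ˢ (Finset.univ : Finset (Equiv.Perm (Fin N)))).sup'
    ((Finset.nonempty_range_add_one).product Finset.univ_nonempty)
    (fun q => gfun N (penum N q.1) (x ∘ q.2))

/-- there is a nondecreasing sequence of nonnegative lower semicontinuous
permutation-invariant elementary costs increasing pointwise to the Coulomb cost. -/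
theorem stmt2 (N : ℕ) (hN : 2 ≤ N) :
    ∃ c_n : ℕ → (Fin N → E3) → ℝ,
      (∀ n x, 0 ≤ c_n n x) ∧
      (∀ n, LowerSemicontinuous (c_n n)) ∧
      (∀ n (σ : Equiv.Perm (Fin N)) (x : Fin N → E3), c_n n (x ∘ σ) = c_n n x) ∧
      (∀ n, Elementary N (c_n n)) ∧
      (∀ n x, ENNReal.ofReal (c_n n x) ≤ coulomb N x) ∧
      (∀ x, Monotone fun n => c_n n x) ∧
      (∀ x, Tendsto (fun n => ENNReal.ofReal (c_n n x)) atTop (𝓝 (coulomb N x))) := by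
  classical
  refine ⟨cseq N, ?_, ?_, ?_, ?_, ?_, ?_, ?_⟩
  · -- nonnegativity
    intro n x
    have hmem : ((n, (1 : Equiv.Perm (Fin N))) : ℕ × Equiv.Perm (Fin N)) ∈
        Finset.range (n + 1) ×ˢ (Finset.univ : Finset (Equiv.Perm (Fin N))) :=
      Finset.mem_product.2 ⟨Finset.self_mem_range_succ n, Finset.mem_univ _⟩
    exact Finset.le_sup'_of_le _ hmem (gfun_nonneg N _ _)
  · -- lower semicontinuity
    intro n
    refine lsc_sup' _ _ _ fun q _ => ?_
    have hU : IsOpen {x : Fin N → E3 | ∀ j, x (q.2 j) ∈ pball N (penum N q.1) j} := by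
      have : {x : Fin N → E3 | ∀ j, x (q.2 j) ∈ pball N (penum N q.1) j}
          = ⋂ j, (fun x : Fin N → E3 => x (q.2 j)) ⁻¹' (pball N (penum N q.1) j) := by
        ext x; simp [Set.mem_iInter]
      rw [this]
      exact isOpen_iInter_of_finite fun j =>
        (Metric.isOpen_ball).preimage (continuous_apply (q.2 j))
    have hrw : (fun x : Fin N → E3 => gfun N (penum N q.1) (x ∘ q.2))
        = Set.indicator {x : Fin N → E3 | ∀ j, x (q.2 j) ∈ pball N (penum N q.1) j}
          (fun _ => pval N (penum N q.1)) := by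
      funext x
      rw [gfun_eq_indicator]
      by_cases hx : ∀ j, x (q.2 j) ∈ pball N (penum N q.1) j
      · have h1 : (x ∘ q.2) ∈ {z : Fin N → E3 | ∀ j, z j ∈ pball N (penum N q.1) j} := hx
        have h2 : x ∈ {z : Fin N → E3 | ∀ j, z (q.2 j) ∈ pball N (penum N q.1) j} := hx
        rw [Set.indicator_of_mem h1, Set.indicator_of_mem h2]
      · have h1 : (x ∘ q.2) ∉ {z : Fin N → E3 | ∀ j, z j ∈ pball N (penum N q.1) j} := hx
        have h2 : x ∉ {z : Fin N → E3 | ∀ j, z (q.2 j) ∈ pball N (penum N q.1) j} := hx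
        rw [Set.indicator_of_notMem h1, Set.indicator_of_notMem h2]
    rw [hrw]
    exact hU.lowerSemicontinuous_indicator (pval_nonneg N _)
  · -- permutation invariance
    have key : ∀ n (σ : Equiv.Perm (Fin N)) x, cseq N n (x ∘ σ) ≤ cseq N n x := by
      intro n σ x
      refine Finset.sup'_le _ _ fun q hq => ?_
      have hmem : (q.1, σ * q.2) ∈
          Finset.range (n + 1) ×ˢ (Finset.univ : Finset (Equiv.Perm (Fin N))) := by
        rw [Finset.mem_product] at hq ⊢
        exact ⟨hq.1, Finset.mem_univ _⟩
      refine le_trans (le_of_eq ?_) (Finset.le_sup' _ hmem)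
      have hcomp : (x ∘ σ) ∘ ⇑q.2 = x ∘ ⇑(σ * q.2) := by
        funext j; simp [Equiv.Perm.mul_apply]
      rw [hcomp]
    intro n σ x
    refine le_antisymm (key n σ x) ?_
    have := key n σ⁻¹ (x ∘ σ)
    have hxx : (x ∘ σ) ∘ ⇑σ⁻¹ = x := by
      funext j; simp
    rwa [hxx] at this
  · -- elementary
    intro n
    unfold cseq
    refine elem_sup' (Finset.range (n + 1) ×ˢ (Finset.univ : Finset (Equiv.Perm (Fin N))))
      ((Finset.nonempty_range_add_one).product Finset.univ_nonempty)
      (fun q x => gfun N (penum N q.1) (x ∘ q.2)) (fun q _ => ?_)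
    refine ⟨1, fun _ => pval N (penum N q.1), fun _ j => pball N (penum N q.1) (q.2⁻¹ j),
      fun _ j => measurableSet_ball, fun x => ?_⟩
    rw [Fin.sum_univ_one]
    beta_reduce
    unfold gfun
    have hprod : (∏ j, Set.indicator (pball N (penum N q.1) j) (fun _ => (1 : ℝ)) ((x ∘ q.2) j))
        = ∏ j, Set.indicator (pball N (penum N q.1) (q.2⁻¹ j)) (fun _ => (1 : ℝ)) (x j) := by
      rw [← Equiv.prod_comp q.2
        (fun j => Set.indicator (pball N (penum N q.1) (q.2⁻¹ j)) (fun _ => (1 : ℝ)) (x j))]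
      exact Finset.prod_congr rfl fun j _ => by simp
    rw [hprod]
  · -- domination
    intro n x
    unfold cseq
    obtain ⟨q, hq, hval⟩ := Finset.exists_mem_eq_sup'
      ((Finset.nonempty_range_add_one).product Finset.univ_nonempty)
      (fun q : ℕ × Equiv.Perm (Fin N) => gfun N (penum N q.1) (x ∘ q.2))
    rw [hval]
    exact le_trans (gfun_le N _ _) (le_of_eq (coulomb_comp_perm N q.2 x))
  · -- monotone
    intro x m n hmn
    show cseq N m x ≤ cseq N n x
    unfold cseq
    refine Finset.sup'_le _ _ fun q hq => ?_
    refine Finset.le_sup' (fun q : ℕ × Equiv.Perm (Fin N) => gfun N (penum N q.1) (x ∘ q.2)) ?_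
    rw [Finset.mem_product] at hq ⊢
    exact ⟨Finset.mem_range.2 (lt_of_lt_of_le (Finset.mem_range.1 hq.1)
      (by omega)), Finset.mem_univ _⟩
  · -- convergence
    intro x
    have hmono : Monotone (fun n => ENNReal.ofReal (cseq N n x)) := by
      intro m n hmn
      refine ENNReal.ofReal_le_ofReal ?_
      unfold cseq
      refine Finset.sup'_le _ _ fun q hq => ?_
      refine Finset.le_sup' (fun q : ℕ × Equiv.Perm (Fin N) => gfun N (penum N q.1) (x ∘ q.2)) ?_
      rw [Finset.mem_product] at hq ⊢
      exact ⟨Finset.mem_range.2 (lt_of_lt_of_le (Finset.mem_range.1 hq.1)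
        (by omega)), Finset.mem_univ _⟩
    have hle : ∀ n, ENNReal.ofReal (cseq N n x) ≤ coulomb N x := by
      intro n
      unfold cseq
      obtain ⟨q, hq, hval⟩ := Finset.exists_mem_eq_sup'
        ((Finset.nonempty_range_add_one).product Finset.univ_nonempty)
        (fun q : ℕ × Equiv.Perm (Fin N) => gfun N (penum N q.1) (x ∘ q.2))
      rw [hval]
      exact le_trans (gfun_le N _ _) (le_of_eq (coulomb_comp_perm N q.2 x))
    have htend := tendsto_atTop_iSup hmono
    have hsup : (⨆ n, ENNReal.ofReal (cseq N n x)) = coulomb N x := by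
      refine le_antisymm (iSup_le hle) ?_
      refine le_of_forall_lt fun b hb => ?_
      obtain ⟨q, hq0, hbq, hqc⟩ := ENNReal.lt_iff_exists_rat_btwn.1 hb
      -- find a suitable parameter
      have hopen : IsOpen {y : Fin N → E3 | (Real.toNNReal (q : ℝ) : ℝ≥0∞) < coulomb N y} :=
        isOpen_lt continuous_const (coulomb_continuous N)
      have hxmem : x ∈ {y : Fin N → E3 | (Real.toNNReal (q : ℝ) : ℝ≥0∞) < coulomb N y} := hqc
      obtain ⟨ε, hε, hball⟩ := Metric.isOpen_iff.1 hopen x hxmem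
      obtain ⟨r, hr1, hr2⟩ := exists_rat_btwn (show ε / 4 < ε / 2 by linarith)
      have hr0 : (0 : ℝ) < r := lt_trans (by linarith) hr1
      have hcent : ∀ j : Fin N, ∃ m : ℕ, dist (x j) (dseq m) < ε / 4 := by
        intro j
        exact Metric.denseRange_iff.1 dseq_dense (x j) (ε / 4) (by linarith)
      choose m hm using hcent
      set p : PParam N := (m, r, q) with hp
      have hpvalid : pvalid N p := by
        refine ⟨hq0, fun y hy => ?_⟩
        have hyball : y ∈ Metric.ball x ε := by
          rw [Metric.mem_ball, dist_pi_lt_iff hε]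
          intro j
          have h1 : dist (y j) (dseq (m j)) < (r : ℝ) := hy j
          have h2 := hm j
          calc dist (y j) (x j) ≤ dist (y j) (dseq (m j)) + dist (dseq (m j)) (x j) :=
                dist_triangle _ _ _
            _ < (r : ℝ) + ε / 4 := by
                have := dist_comm (dseq (m j)) (x j)
                rw [this]; linarith
            _ < ε := by linarith
        have := hball hyball
        rw [ENNReal.ofReal]
        exact le_of_lt this
      have hxp : ∀ j, x j ∈ pball N p j := by
        intro j
        have := hm j
        simp only [pball, Metric.mem_ball]
        calc dist (x j) (dseq (m j)) < ε / 4 := hm j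
          _ < (r : ℝ) := hr1
      obtain ⟨n0, hn0⟩ := penum_surj N p
      have hlow : (Real.toNNReal (q : ℝ) : ℝ≥0∞) ≤ ENNReal.ofReal (cseq N n0 x) := by
        have hterm : (q : ℝ) ≤ cseq N n0 x := by
          unfold cseq
          have hmem : ((n0 : ℕ), (1 : Equiv.Perm (Fin N))) ∈
              Finset.range (n0 + 1) ×ˢ (Finset.univ : Finset (Equiv.Perm (Fin N))) :=
            Finset.mem_product.2 ⟨Finset.self_mem_range_succ n0, Finset.mem_univ _⟩
          refine Finset.le_sup'_of_le _ hmem ?_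
          have hx1 : x ∘ (1 : Equiv.Perm (Fin N)) = x := by funext j; simp
          rw [hx1, hn0]
          have hxp' : x ∈ {z : Fin N → E3 | ∀ j, z j ∈ pball N p j} := hxp
          rw [gfun_eq_indicator, Set.indicator_of_mem hxp']
          unfold pval
          rw [if_pos hpvalid]
        calc (Real.toNNReal (q : ℝ) : ℝ≥0∞) = ENNReal.ofReal (q : ℝ) := rfl
          _ ≤ ENNReal.ofReal (cseq N n0 x) := ENNReal.ofReal_le_ofReal hterm
      calc b < (Real.toNNReal (q : ℝ) : ℝ≥0∞) := hbq
        _ ≤ ENNReal.ofReal (cseq N n0 x) := hlow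
        _ ≤ ⨆ n, ENNReal.ofReal (cseq N n x) := le_iSup (fun n => ENNReal.ofReal (cseq N n x)) n0
    rwa [hsup] at htend
end
end

section
/- Let (F_n) be a sequence of functions X → ℝ̄ on a metric space X that Γ-converges to F, and suppose there is a nonempty compact set K ⊆ X such that inf_X F_n = inf_K F_n for all n. Then F attains a minimum on X, and inf_X F_n converges to min_X F. Moreover, if (x_n) satisfies lim_n F_n(x_n) = lim_n inf_X F_n and a subsequence of (x_n) converges to some x, then F(x) = inf_X F. -/
open Filter Topology

noncomputable section

/-- the fundamental theorem of Γ-convergence with equi-mild coercivity: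
the limit functional attains its minimum, the infima converge to the minimum, and
every cluster point of an asymptotically minimizing sequence is a minimizer. -/
theorem stmt4 {X : Type*} [MetricSpace X] (F : ℕ → X → EReal) (Flim : X → EReal)
    (hliminf : ∀ (x : X) (s : ℕ → X), Tendsto s atTop (𝓝 x) →
      Flim x ≤ liminf (fun n => F n (s n)) atTop)
    (hlimsup : ∀ x : X, ∃ s : ℕ → X, Tendsto s atTop (𝓝 x) ∧
      limsup (fun n => F n (s n)) atTop ≤ Flim x)
    (K : Set X) (hK : IsCompact K) (hKne : K.Nonempty)
    (hcoer : ∀ n, (⨅ x, F n x) = ⨅ x ∈ K, F n x) :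
    (∃ x₀, ∀ x, Flim x₀ ≤ Flim x) ∧
    Tendsto (fun n => ⨅ x, F n x) atTop (𝓝 (⨅ x, Flim x)) ∧
    (∀ (x : ℕ → X) (L : EReal), Tendsto (fun n => F n (x n)) atTop (𝓝 L) →
      Tendsto (fun n => ⨅ z, F n z) atTop (𝓝 L) →
      ∀ (φ : ℕ → ℕ) (x₀ : X), StrictMono φ → Tendsto (x ∘ φ) atTop (𝓝 x₀) →
        Flim x₀ = ⨅ z, Flim z) := by
  classical
  set m : ℕ → EReal := fun n => ⨅ x, F n x with hm
  set L : EReal := ⨅ x, Flim x with hL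
  -- Key "cluster point" lemma from the liminf inequality
  have cluster : ∀ (y : ℕ → X) (σ : ℕ → ℕ) (x₀ : X), StrictMono σ →
      Tendsto y atTop (𝓝 x₀) →
      Flim x₀ ≤ liminf (fun k => F (σ k) (y k)) atTop := by
    intro y σ x₀ hσ hy
    set s : ℕ → X := fun n => if h : ∃ k, σ k = n then y h.choose else x₀ with hs
    have hsσ : ∀ k, s (σ k) = y k := by
      intro k
      have h : ∃ j, σ j = σ k := ⟨k, rfl⟩
      simp only [hs, dif_pos h]
      congr 1
      exact hσ.injective h.choose_spec
    have hst : Tendsto s atTop (𝓝 x₀) := by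
      rw [tendsto_atTop'] at hy ⊢
      intro U hU
      obtain ⟨N, hN⟩ := hy U hU
      refine ⟨σ N, fun n hn => ?_⟩
      by_cases h : ∃ k, σ k = n
      · simp only [hs, dif_pos h]
        apply hN
        have hc : σ h.choose = n := h.choose_spec
        exact hσ.le_iff_le.mp (by rw [hc]; exact hn)
      · simp only [hs, dif_neg h]
        exact mem_of_mem_nhds hU
    refine (hliminf x₀ s hst).trans ?_
    have hmap : map σ atTop ≤ atTop := hσ.tendsto_atTop
    calc liminf (fun n => F n (s n)) atTop
        ≤ liminf (fun n => F n (s n)) (map σ atTop) :=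
          Filter.liminf_le_liminf_of_le hmap
      _ = liminf (fun k => F (σ k) (s (σ k))) atTop := by
          rw [← Filter.liminf_comp]; rfl
      _ = liminf (fun k => F (σ k) (y k)) atTop := by
          congr 1; funext k; rw [hsσ]
  -- Step A : limsup of the infima is at most L
  have hA : limsup m atTop ≤ L := by
    rw [hL]
    refine le_iInf fun x => ?_
    obtain ⟨s, hs, hsl⟩ := hlimsup x
    refine le_trans ?_ hsl
    exact Filter.limsup_le_limsup (Eventually.of_forall fun n => iInf_le _ (s n))
  -- From any value above liminf m we find a near-minimizer of Flim in K
  have key : ∀ c : EReal, liminf m atTop < c → ∃ x₀ ∈ K, Flim x₀ ≤ c := by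
    intro c hc
    have hfreq : ∃ᶠ n in atTop, m n < c := by
      by_contra h
      rw [not_frequently] at h
      have hev : ∀ᶠ n in atTop, c ≤ m n := h.mono fun n hn => not_lt.1 hn
      exact absurd hc (not_lt.2 (Filter.le_liminf_of_le (by isBoundedDefault) hev))
    obtain ⟨φ, hφ, hφc⟩ := Filter.extraction_of_frequently_atTop hfreq
    have hy : ∀ k, ∃ z, z ∈ K ∧ F (φ k) z < c := by
      intro k
      have h1 : (⨅ x ∈ K, F (φ k) x) < c := by
        rw [← hcoer (φ k)]; exact hφc k
      rw [iInf_lt_iff] at h1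
      obtain ⟨z, hz⟩ := h1
      rw [iInf_lt_iff] at hz
      obtain ⟨hzK, hzc⟩ := hz
      exact ⟨z, hzK, hzc⟩
    choose y hyK hyc using hy
    obtain ⟨x₀, hx₀K, ψ, hψ, hyψ⟩ := hK.tendsto_subseq hyK
    have hcl := cluster (y ∘ ψ) (φ ∘ ψ) x₀ (hφ.comp hψ) hyψ
    refine ⟨x₀, hx₀K, hcl.trans ?_⟩
    exact Filter.liminf_le_of_frequently_le'
      (Frequently.of_forall fun k => (hyc (ψ k)).le)
  -- Step B : L is at most the liminf of the infima
  have hB : L ≤ liminf m atTop := by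
    refine le_of_forall_gt_imp_ge_of_dense fun c hc => ?_
    obtain ⟨x₀, _, hx₀⟩ := key c hc
    exact le_trans (iInf_le Flim x₀) hx₀
  -- Part 2 : convergence of infima
  have h2 : Tendsto m atTop (𝓝 L) := tendsto_of_le_liminf_of_limsup_le hB hA
  -- Part 1 : existence of a minimizer
  have h1 : ∃ x₀, ∀ x, Flim x₀ ≤ Flim x := by
    by_cases hLtop : L = ⊤
    · refine ⟨hKne.some, fun x => ?_⟩
      have hx : (⊤ : EReal) ≤ Flim x := hLtop ▸ iInf_le Flim x
      exact le_trans le_top hx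
    -- in this case we build an approximate minimizing sequence
    · set c : ℕ → EReal :=
        fun n => max (m n) (((-(n : ℝ)) : ℝ) : EReal) + (((1 : ℝ)/(n+1) : ℝ) : EReal)
        with hcdef
      have hsel : ∀ n, ∃ z, z ∈ K ∧ (m n < ⊤ → F n z < c n) := by
        intro n
        by_cases hmn : m n < ⊤
        · have hmc : m n < c n := by
            set a : EReal := max (m n) (((-(n : ℝ)) : ℝ) : EReal) with ha
            have hane_top : a ≠ ⊤ := by
              rw [ha, ne_eq, max_eq_top]
              push_neg
              exact ⟨hmn.ne, EReal.coe_ne_top _⟩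
            have hane_bot : a ≠ ⊥ := by
              rw [ha]
              exact ne_bot_of_le_ne_bot (EReal.coe_ne_bot _) (le_max_right _ _)
            have hcoe : ((a.toReal : ℝ) : EReal) = a := EReal.coe_toReal hane_top hane_bot
            have hlt : a < c n := by
              rw [hcdef]
              calc a = ((a.toReal : ℝ) : EReal) := hcoe.symm
                _ < ((a.toReal + (1 : ℝ)/(n+1) : ℝ) : EReal) := by
                    rw [EReal.coe_lt_coe_iff]
                    have : (0:ℝ) < 1/(n+1) := by positivity
                    linarith
                _ = a + (((1 : ℝ)/(n+1) : ℝ) : EReal) := by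
                    rw [EReal.coe_add, hcoe]
            exact lt_of_le_of_lt (le_max_left _ _) hlt
          have h1' : (⨅ x ∈ K, F n x) < c n := by rw [← hcoer n]; exact hmc
          rw [iInf_lt_iff] at h1'
          obtain ⟨z, hz⟩ := h1'
          rw [iInf_lt_iff] at hz
          obtain ⟨hzK, hzc⟩ := hz
          exact ⟨z, hzK, fun _ => hzc⟩
        · exact ⟨hKne.some, hKne.some_mem, fun h => absurd h hmn⟩
      choose y hyK hyc using hsel
      -- the limsup of F n (y n) is at most L
      have hlimsupY : limsup (fun n => F n (y n)) atTop ≤ L := by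
        refine le_of_forall_gt_imp_ge_of_dense fun cc hcc => ?_
        obtain ⟨c', hc'1, hc'2⟩ := exists_between hcc
        have hc'bot : c' ≠ ⊥ := (lt_of_le_of_lt bot_le hc'1).ne'
        have hc'top : c' ≠ ⊤ := (lt_of_lt_of_le hc'2 le_top).ne
        set r : ℝ := c'.toReal with hr
        have hrc : ((r : ℝ) : EReal) = c' := EReal.coe_toReal hc'top hc'bot
        have hev1 : ∀ᶠ n in atTop, m n < c' := h2.eventually_lt_const hc'1
        by_cases hcc_top : cc = ⊤
        · refine Filter.limsup_le_of_le (by isBoundedDefault) ?_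
          exact Eventually.of_forall fun n => hcc_top ▸ le_top
        · have hccbot : cc ≠ ⊥ := (lt_of_le_of_lt bot_le hcc).ne'
          set s : ℝ := cc.toReal with hs'
          have hsc : ((s : ℝ) : EReal) = cc := EReal.coe_toReal hcc_top hccbot
          have hrs : r < s := by
            rw [← EReal.coe_lt_coe_iff, hrc, hsc]; exact hc'2
          have hev2 : ∀ᶠ (n : ℕ) in atTop, ((1 : ℝ)/((n : ℝ)+1) : ℝ) ≤ s - r := by
            have h0 : (0:ℝ) < s - r := by linarith
            exact (tendsto_one_div_add_atTop_nhds_zero_nat.eventually_lt_const h0).mono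
              fun n hn => hn.le
          have hev3 : ∀ᶠ (n : ℕ) in atTop, (-(n : ℝ)) ≤ r := by
            rw [eventually_atTop]
            refine ⟨⌈-r⌉₊, fun n hn => ?_⟩
            have := Nat.le_ceil (-r)
            have h2' : (⌈-r⌉₊ : ℝ) ≤ n := Nat.cast_le.mpr hn
            linarith
          refine Filter.limsup_le_of_le (by isBoundedDefault) ?_
          filter_upwards [hev1, hev2, hev3] with n h1' h2' h3'
          have hmn : m n < ⊤ := lt_of_lt_of_le h1' le_top |>.trans_le le_top
          have hmn' : m n < ⊤ := lt_of_lt_of_le h1' (le_top)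
          have hFn : F n (y n) < c n := hyc n hmn'
          refine hFn.le.trans ?_
          rw [hcdef]
          have hmax : max (m n) (((-(n : ℝ)) : ℝ) : EReal) ≤ ((r : ℝ) : EReal) := by
            refine max_le ?_ ?_
            · rw [hrc]; exact h1'.le
            · exact EReal.coe_le_coe_iff.mpr h3'
          have hfrac : (((1 : ℝ)/(n+1) : ℝ) : EReal) ≤ ((s - r : ℝ) : EReal) :=
            EReal.coe_le_coe_iff.mpr h2'
          calc max (m n) (((-(n : ℝ)) : ℝ) : EReal) + (((1 : ℝ)/(n+1) : ℝ) : EReal)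
              ≤ ((r : ℝ) : EReal) + ((s - r : ℝ) : EReal) := add_le_add hmax hfrac
            _ = ((r + (s - r) : ℝ) : EReal) := by rw [EReal.coe_add]
            _ = ((s : ℝ) : EReal) := by norm_num
            _ = cc := hsc
      obtain ⟨x₀, hx₀K, ψ, hψ, hyψ⟩ := hK.tendsto_subseq hyK
      have hcl := cluster (y ∘ ψ) ψ x₀ hψ hyψ
      have hsub : liminf (fun k => F (ψ k) ((y ∘ ψ) k)) atTop ≤ L := by
        refine le_trans (Filter.liminf_le_limsup) ?_
        have hmap : map ψ atTop ≤ atTop := hψ.tendsto_atTop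
        calc limsup (fun k => F (ψ k) ((y ∘ ψ) k)) atTop
            = limsup (fun n => F n (y n)) (map ψ atTop) := by
              rw [← Filter.limsup_comp]; rfl
          _ ≤ limsup (fun n => F n (y n)) atTop :=
              Filter.limsup_le_limsup_of_le hmap
          _ ≤ L := hlimsupY
      refine ⟨x₀, fun x => ?_⟩
      exact le_trans (hcl.trans hsub) (iInf_le Flim x)
  -- Part 3 : cluster points of asymptotically minimizing sequences minimize
  refine ⟨h1, h2, ?_⟩
  intro x L' hxL hmL φ x₀ hφ hxφ
  have hLL' : L' = L := tendsto_nhds_unique hmL h2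
  have hcl := cluster (x ∘ φ) φ x₀ hφ hxφ
  have hlim : liminf (fun k => F (φ k) ((x ∘ φ) k)) atTop = L' := by
    have : Tendsto (fun k => F (φ k) ((x ∘ φ) k)) atTop (𝓝 L') :=
      hxL.comp hφ.tendsto_atTop
    exact this.liminf_eq
  refine le_antisymm ?_ (iInf_le Flim x₀)
  calc Flim x₀ ≤ liminf (fun k => F (φ k) ((x ∘ φ) k)) atTop := hcl
    _ = L' := hlim
    _ = ⨅ z, Flim z := hLL'
end
end

section
/- Let ρ be a Borel probability measure on ℝ³ that is not concentrated on a set of at most N−1 points, and let c(x₁,…,x_N) = Σ_{1≤i<j≤N} 1/|x_i−x_j| be the Coulomb cost. If u ∈ L¹(ρ) satisfies u(x₁) + ⋯ + u(x_N) ≤ c(x₁,…,x_N) for ρ^N-almost every (x₁,…,x_N), then there exists a constant k ∈ ℝ such that u ≤ k ρ-almost everywhere. -/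
open MeasureTheory Filter Topology
open scoped ENNReal
open Metric Set

noncomputable section

lemma exists_min_dist {α : Type*} [MetricSpace α] {n : ℕ} (hn : 2 ≤ n) (y : Fin n → α)
    (hy : Function.Injective y) :
    ∃ δ : ℝ, 0 < δ ∧ ∀ i j, i ≠ j → δ ≤ dist (y i) (y j) := by
  classical
  have hne : (Finset.univ.offDiag (α := Fin n)).Nonempty := by
    refine ⟨(⟨0, by omega⟩, ⟨1, by omega⟩), ?_⟩
    simp [Finset.mem_offDiag, Fin.ext_iff]
  refine ⟨Finset.inf' _ hne (fun p : Fin n × Fin n => dist (y p.1) (y p.2)), ?_, ?_⟩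
  · rw [Finset.lt_inf'_iff]
    rintro ⟨a, b⟩ hab
    simp only [Finset.mem_offDiag] at hab
    exact dist_pos.2 fun h => hab.2.2 (hy h)
  · intro i j hij
    exact Finset.inf'_le (b := (i, j)) (fun p : Fin n × Fin n => dist (y p.1) (y p.2))
      (Finset.mem_offDiag.2 ⟨Finset.mem_univ i, Finset.mem_univ j, hij⟩)

lemma exists_pts (N : ℕ) (ρ : Measure E3) [IsProbabilityMeasure ρ]
    (hnc : ¬ ∃ S : Finset E3, S.card ≤ N - 1 ∧ ρ ↑S = 1) :
    ∃ y : Fin N → E3, Function.Injective y ∧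
      ∀ i, ∀ ε > 0, 0 < ρ (Metric.ball (y i) ε) := by
  classical
  set s : Set E3 := {x | ∀ ε > 0, 0 < ρ (Metric.ball x ε)} with hs
  have hcompl : ρ sᶜ = 0 := by
    apply measure_null_of_locally_null
    intro x hx
    simp only [hs, mem_compl_iff, mem_setOf_eq, not_forall] at hx
    obtain ⟨ε, hε, h0⟩ := hx
    refine ⟨Metric.ball x ε, ?_, ?_⟩
    · exact mem_nhdsWithin_of_mem_nhds (Metric.ball_mem_nhds x hε)
    · simpa using h0
  have hsopen : IsOpen sᶜ := by
    rw [isOpen_iff_mem_nhds]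
    intro x hx
    simp only [hs, mem_compl_iff, mem_setOf_eq, not_forall] at hx
    obtain ⟨ε, hε, h0⟩ := hx
    have h0' : ρ (Metric.ball x ε) = 0 := by simpa using h0
    filter_upwards [Metric.ball_mem_nhds x (half_pos hε)] with z hz
    simp only [mem_compl_iff, hs, mem_setOf_eq, not_forall]
    refine ⟨ε/2, half_pos hε, ?_⟩
    have : Metric.ball z (ε/2) ⊆ Metric.ball x ε := by
      intro w hw
      have := dist_triangle w z x
      simp only [Metric.mem_ball] at *
      linarith
    simp [le_zero_iff.1 (h0' ▸ measure_mono this)]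
  have hsmeas : MeasurableSet s := hsopen.measurableSet.of_compl
  have hsfull : ρ s = 1 := by
    have := measure_add_measure_compl (μ := ρ) hsmeas
    rw [hcompl, add_zero] at this; simpa using this
  obtain ⟨T, hTs, hTcard⟩ : ∃ T : Finset E3, ↑T ⊆ s ∧ T.card = N := by
    by_cases hfin : s.Finite
    · have hcard : ¬ hfin.toFinset.card ≤ N - 1 := by
        intro h
        exact hnc ⟨hfin.toFinset, h, by rwa [hfin.coe_toFinset]⟩
      have : N ≤ hfin.toFinset.card := by omega
      obtain ⟨T, hT, hTc⟩ := Finset.exists_subset_card_eq this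
      exact ⟨T, by intro x hx; rw [← hfin.coe_toFinset]; exact_mod_cast hT hx, hTc⟩
    · obtain ⟨T, hT, hTc⟩ := Set.Infinite.exists_subset_card_eq hfin N
      exact ⟨T, hT, hTc⟩
  refine ⟨fun i => T.equivFin.symm (Fin.cast hTcard.symm i), ?_, ?_⟩
  · intro a b hab
    have := T.equivFin.symm.injective (Subtype.ext hab)
    simpa [Fin.ext_iff] using this
  · intro i ε hε
    exact hTs (T.equivFin.symm (Fin.cast hTcard.symm i)).2 ε hε

set_option maxHeartbeats 1000000 in
/-- if ρ is not concentrated on at most N−1 points and u ∈ L¹(ρ) satisfies the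
Kantorovich dual constraint for the Coulomb cost ρ^N-a.e., then u is bounded above ρ-a.e. -/
theorem stmt6 (N : ℕ) (hN : 2 ≤ N) (ρ : Measure E3) [IsProbabilityMeasure ρ]
    (hnc : ¬ ∃ S : Finset E3, S.card ≤ N - 1 ∧ ρ ↑S = 1)
    (u : E3 → ℝ) (hu : Integrable u ρ)
    (hcon : ∀ᵐ x ∂(Measure.pi fun _ : Fin N => ρ),
      ENNReal.ofReal (∑ i, u (x i)) ≤ coulomb N x) :
    ∃ k : ℝ, ∀ᵐ x ∂ρ, u x ≤ k := by
  classical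
  obtain ⟨y, hyinj, hy⟩ := exists_pts N ρ hnc
  set g : E3 → ℝ := hu.1.mk u with hgdef
  have hgm : Measurable g := hu.1.stronglyMeasurable_mk.measurable
  have hug : u =ᵐ[ρ] g := hu.1.ae_eq_mk
  obtain ⟨Z, hZsub, hZm, hZ0⟩ :=
    exists_measurable_superset_of_null (ae_iff.1 hug)
  obtain ⟨δ, hδpos, hδle⟩ := exists_min_dist hN y hyinj
  have hMex : ∀ i : Fin N, ∃ M : ℝ, 0 ≤ M ∧
      0 < ρ (Metric.ball (y i) (δ/4) ∩ {x | |g x| ≤ M}) := by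
    intro i
    by_contra h
    push_neg at h
    have hnull : ∀ n : ℕ, ρ (Metric.ball (y i) (δ/4) ∩ {x | |g x| ≤ (n:ℝ)}) = 0 := by
      intro n
      have := h n (Nat.cast_nonneg n)
      exact le_antisymm this zero_le
    have hsub : Metric.ball (y i) (δ/4) ⊆
        ⋃ n : ℕ, Metric.ball (y i) (δ/4) ∩ {x | |g x| ≤ (n:ℝ)} := by
      intro x hx
      obtain ⟨n, hn⟩ := exists_nat_ge (|g x|)
      exact Set.mem_iUnion.2 ⟨n, hx, hn⟩
    have := measure_mono_null hsub (measure_iUnion_null hnull)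
    exact absurd this (hy i (δ/4) (by linarith)).ne'
  choose M hM0 hMball using hMex
  set R : Fin N → Set E3 := fun i => {x | ∀ j, j ≠ i → δ/2 ≤ dist x (y j)} with hRdef
  have hRclosed : ∀ i, IsClosed (R i) := by
    intro i
    have : R i = ⋂ j ∈ {j : Fin N | j ≠ i}, {x : E3 | δ/2 ≤ dist x (y j)} := by
      ext x; simp [hRdef]
    rw [this]
    exact isClosed_biInter fun j _ =>
      isClosed_le continuous_const (continuous_id.dist continuous_const)
  have hcover : ∀ x : E3, ∃ i, x ∈ R i := by
    intro x
    by_cases h : ∃ i, dist x (y i) < δ/2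
    · obtain ⟨i, hi⟩ := h
      refine ⟨i, fun j hj => ?_⟩
      by_contra hlt
      push_neg at hlt
      have h1 := hδle i j fun he => hj (he.symm)
      have h2 := dist_triangle (y i) x (y j)
      rw [dist_comm (y i) x] at h2
      linarith
    · push_neg at h
      exact ⟨⟨0, by omega⟩, fun j _ => h j⟩
  set C : ℝ := ((Finset.univ.filter (fun p : Fin N × Fin N => p.1 < p.2)).card : ℝ) * (4/δ)
    with hCdef
  have hC0 : 0 ≤ C := by positivity
  set k : ℝ := C + ∑ i, M i with hkdef
  have key : ∀ i : Fin N, ρ (R i ∩ {x | k < g x}) = 0 := by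
    intro i
    by_contra hpos
    set s : Fin N → Set E3 := fun j =>
      if j = i then R i ∩ {x | k < g x}
      else Metric.ball (y j) (δ/4) ∩ {x | |g x| ≤ M j} with hsdef
    have hsm : ∀ j, MeasurableSet (s j) := by
      intro j
      rw [hsdef]
      dsimp only
      split_ifs
      · exact ((hRclosed i).measurableSet).inter (measurableSet_lt measurable_const hgm)
      · exact measurableSet_ball.inter (measurableSet_le hgm.abs measurable_const)
    set π : Measure (Fin N → E3) := Measure.pi fun _ : Fin N => ρ with hπdef
    have hπpi : π (Set.pi Set.univ s) = ∏ j, ρ (s j) := Measure.pi_pi _ _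
    have hπpos : π (Set.pi Set.univ s) ≠ 0 := by
      rw [hπpi]
      rw [Finset.prod_ne_zero_iff]
      intro j _
      rw [hsdef]
      dsimp only
      split_ifs with hj
      · subst hj; exact hpos
      · exact (hMball j).ne'
    obtain ⟨Z₀, hZ₀sub, hZ₀m, hZ₀0⟩ := exists_measurable_superset_of_null (ae_iff.1 hcon)
    have hWnull : ∀ j : Fin N, π (Function.eval j ⁻¹' Z) = 0 := by
      intro j
      have hpre : Function.eval j ⁻¹' Z =
          Set.pi Set.univ (Function.update (fun _ : Fin N => (Set.univ : Set E3)) j Z) := by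
        ext x
        simp only [Set.mem_preimage, Set.mem_pi, Set.mem_univ, true_implies]
        constructor
        · intro hx l
          rcases eq_or_ne l j with rfl | hl
          · simpa using hx
          · simp [Function.update_of_ne hl]
        · intro hx
          have := hx j
          simpa using this
      rw [hpre, Measure.pi_pi]
      refine Finset.prod_eq_zero (Finset.mem_univ j) ?_
      simp [hZ0]
    set Bad : Set (Fin N → E3) := Z₀ ∪ ⋃ j, Function.eval j ⁻¹' Z with hBad
    have hBadnull : π Bad = 0 :=
      measure_union_null hZ₀0 (measure_iUnion_null hWnull)
    have hgood : (Set.pi Set.univ s \ Bad).Nonempty := by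
      apply nonempty_of_measure_ne_zero (μ := π)
      rw [measure_diff_null hBadnull]
      exact hπpos
    obtain ⟨x, hxs, hxBad⟩ := hgood
    have hxZ₀ : x ∉ Z₀ := fun h => hxBad (Or.inl h)
    have hxZ : ∀ j, g (x j) = u (x j) := by
      intro j
      have h1 : x j ∉ Z := fun h => hxBad (Or.inr (Set.mem_iUnion.2 ⟨j, h⟩))
      by_contra hne
      exact h1 (hZsub (fun h => hne h.symm))
    have hxcon : ENNReal.ofReal (∑ j, u (x j)) ≤ coulomb N x := by
      by_contra h
      exact hxZ₀ (hZ₀sub h)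
    have hxi : x i ∈ R i ∧ k < g (x i) := by
      have := hxs i (Set.mem_univ i)
      rw [hsdef] at this
      simpa using this
    have hxj : ∀ j, j ≠ i → x j ∈ Metric.ball (y j) (δ/4) ∧ |g (x j)| ≤ M j := by
      intro j hj
      have := hxs j (Set.mem_univ j)
      rw [hsdef] at this
      simpa [hj] using this
    have hsum : C < ∑ j, u (x j) := by
      have he : ∑ j, u (x j) = ∑ j, g (x j) :=
        Finset.sum_congr rfl fun j _ => (hxZ j).symm
      rw [he, ← Finset.add_sum_erase Finset.univ _ (Finset.mem_univ i)]
      have h1 : ∑ j ∈ Finset.univ.erase i, (-(M j)) ≤ ∑ j ∈ Finset.univ.erase i, g (x j) := by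
        refine Finset.sum_le_sum fun j hj => ?_
        have := abs_le.1 (hxj j (Finset.mem_erase.1 hj).1).2
        linarith [this.1]
      have h2 : ∑ j ∈ Finset.univ.erase i, M j ≤ ∑ j, M j :=
        Finset.sum_le_sum_of_subset_of_nonneg (Finset.erase_subset _ _)
          (fun j _ _ => hM0 j)
      have h3 : k < g (x i) := hxi.2
      have h4 : ∑ j ∈ Finset.univ.erase i, (-(M j)) = -(∑ j ∈ Finset.univ.erase i, M j) := by
        rw [Finset.sum_neg_distrib]
      rw [hkdef] at h3
      linarith
    have hdistlb : ∀ p : Fin N × Fin N, p.1 < p.2 → δ/4 ≤ dist (x p.1) (x p.2) := by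
      rintro ⟨a, b⟩ hab
      have hne' : a ≠ b := ne_of_lt hab
      rcases eq_or_ne a i with rfl | ha
      · have hb : b ≠ a := fun h => hne' h.symm
        have h1 : δ/2 ≤ dist (x a) (y b) := hxi.1 b hb
        have h2 : dist (x b) (y b) < δ/4 := by
          have := (hxj b hb).1; rwa [Metric.mem_ball] at this
        have h3 := dist_triangle (x a) (x b) (y b)
        linarith
      · rcases eq_or_ne b i with rfl | hb
        · have h1 : δ/2 ≤ dist (x b) (y a) := hxi.1 a ha
          have h2 : dist (x a) (y a) < δ/4 := by
            have := (hxj a ha).1; rwa [Metric.mem_ball] at this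
          have h3 := dist_triangle (x b) (x a) (y a)
          rw [dist_comm (x b) (x a)] at h3
          linarith
        · have h1 : δ ≤ dist (y a) (y b) := hδle a b hne'
          have h2 : dist (x a) (y a) < δ/4 := by
            have := (hxj a ha).1; rwa [Metric.mem_ball] at this
          have h3 : dist (x b) (y b) < δ/4 := by
            have := (hxj b hb).1; rwa [Metric.mem_ball] at this
          have h4 := dist_triangle (y a) (x a) (y b)
          have h5 := dist_triangle (x a) (x b) (y b)
          rw [dist_comm (y a) (x a)] at h4
          linarith
    have hcoul : coulomb N x ≤ ENNReal.ofReal C := by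
      rw [coulomb]
      have hterm : ∀ p ∈ Finset.univ.filter (fun p : Fin N × Fin N => p.1 < p.2),
          (ENNReal.ofReal (dist (x p.1) (x p.2)))⁻¹ ≤ ENNReal.ofReal (4/δ) := by
        intro p hp
        rw [Finset.mem_filter] at hp
        have hd := hdistlb p hp.2
        have h4δ : (4:ℝ)/δ = (δ/4)⁻¹ := by
          field_simp
        rw [h4δ, ENNReal.ofReal_inv_of_pos (by linarith)]
        exact ENNReal.inv_le_inv' (ENNReal.ofReal_le_ofReal hd)
      calc ∑ p ∈ Finset.univ.filter (fun p : Fin N × Fin N => p.1 < p.2),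
            (ENNReal.ofReal (dist (x p.1) (x p.2)))⁻¹
          ≤ ∑ _p ∈ Finset.univ.filter (fun p : Fin N × Fin N => p.1 < p.2),
            ENNReal.ofReal (4/δ) := Finset.sum_le_sum hterm
        _ = ((Finset.univ.filter (fun p : Fin N × Fin N => p.1 < p.2)).card : ℝ≥0∞) *
            ENNReal.ofReal (4/δ) := by rw [Finset.sum_const, nsmul_eq_mul]
        _ = ENNReal.ofReal C := by
            rw [hCdef, ENNReal.ofReal_mul (by positivity), ENNReal.ofReal_natCast]
    have hfin : ENNReal.ofReal (∑ j, u (x j)) ≤ ENNReal.ofReal C := hxcon.trans hcoul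
    rw [ENNReal.ofReal_le_ofReal_iff hC0] at hfin
    linarith
  refine ⟨k, ?_⟩
  have hgk : ρ {x | k < g x} = 0 := by
    have hsub : {x | k < g x} ⊆ ⋃ i, (R i ∩ {x | k < g x}) := by
      intro x hx
      obtain ⟨i, hi⟩ := hcover x
      exact Set.mem_iUnion.2 ⟨i, hi, hx⟩
    exact measure_mono_null hsub (measure_iUnion_null key)
  have hae : ∀ᵐ x ∂ρ, g x ≤ k := by
    rw [ae_iff]
    simpa [not_le] using hgk
  filter_upwards [hug, hae] with x h1 h2
  rw [h1]; exact h2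
end
end

section
/- Let X₁,…,X_N be finite sets, ρᵢ a probability measure on Xᵢ for each i, and c̃ : X₁×⋯×X_N → ℝ. Then the minimum of ∫ c̃ dγ over probability measures γ on X₁×⋯×X_N with i-th marginal ρᵢ for every i equals the maximum of Σᵢ Σ_{x∈Xᵢ} uᵢ(x) ρᵢ({x}) over tuples of functions uᵢ : Xᵢ → ℝ satisfying u₁(x₁)+⋯+u_N(x_N) ≤ c̃(x₁,…,x_N) for all (x₁,…,x_N), and both the minimum and the maximum are attained. -/
open Finset

noncomputable section


noncomputable section

/-- The finitely generated convex cone as a set. -/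
def coneSet {E : Type*} [AddCommMonoid E] [Module ℝ E] {ι : Type*} [Fintype ι] (v : ι → E) :
    Set E := {x | ∃ t : ι → ℝ, (∀ i, 0 ≤ t i) ∧ ∑ i, t i • v i = x}

lemma sum_subtype_ne {E : Type*} [AddCommMonoid E] {ι : Type*} [Fintype ι] [DecidableEq ι]
    (i₀ : ι) (f : ι → E) :
    ∑ p : {k : ι // k ≠ i₀}, f p.1 = ∑ k ∈ Finset.univ.erase i₀, f k :=
  (Finset.sum_subtype (Finset.univ.erase i₀) (fun k => by simp [Finset.mem_erase]) f).symm

theorem coneSet_closed {E : Type*} [NormedAddCommGroup E] [NormedSpace ℝ E]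
    [FiniteDimensional ℝ E] {ι : Type*} [Fintype ι] [DecidableEq ι] (v : ι → E) :
    IsClosed (coneSet v) := by
  generalize hn : Fintype.card ι = n
  induction n using Nat.strong_induction_on generalizing ι with
  | _ n ih =>
  by_cases hli : LinearIndependent ℝ v
  · -- linear independent case: closed embedding
    set L : (ι → ℝ) →ₗ[ℝ] E :=
      { toFun := fun t => ∑ i, t i • v i
        map_add' := by intro a b; simp [add_smul, Finset.sum_add_distrib]
        map_smul' := by intro r a; simp [smul_smul, Finset.smul_sum] } with hL
    have hker : LinearMap.ker L = ⊥ := by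
      rw [LinearMap.ker_eq_bot']
      intro m hm
      funext i
      exact (Fintype.linearIndependent_iff.mp hli) m hm i
    have hemb := LinearMap.isClosedEmbedding_of_injective hker
    have heq : coneSet v = L '' {t : ι → ℝ | ∀ i, 0 ≤ t i} := by
      ext x
      constructor
      · rintro ⟨t, ht, hx⟩; exact ⟨t, ht, hx⟩
      · rintro ⟨t, ht, hx⟩; exact ⟨t, ht, hx⟩
    rw [heq]
    refine hemb.isClosedMap _ ?_
    have : {t : ι → ℝ | ∀ i, 0 ≤ t i} = ⋂ i, (fun t : ι → ℝ => t i) ⁻¹' Set.Ici 0 := by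
      ext t; simp
    rw [this]
    exact isClosed_iInter fun i => isClosed_Ici.preimage (continuous_apply i)
  · -- dependent case
    rw [Fintype.linearIndependent_iff] at hli
    push_neg at hli
    obtain ⟨g, hg0, hj⟩ : ∃ g : ι → ℝ, ∑ i, g i • v i = 0 ∧ ∃ j, 0 < g j := by
      obtain ⟨g, hg0, j, hgj⟩ := hli
      rcases lt_or_gt_of_ne hgj with h | h
      · exact ⟨-g, by simp [hg0], j, by simpa using h⟩
      · exact ⟨g, hg0, j, h⟩
    obtain ⟨j, hgj⟩ := hj
    have hnpos : 0 < n := by rw [← hn]; exact @Fintype.card_pos ι _ ⟨j⟩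
    have hsub : coneSet v = ⋃ i₀ : ι, coneSet (fun p : {k : ι // k ≠ i₀} => v p.1) := by
      ext x
      simp only [Set.mem_iUnion]
      constructor
      · rintro ⟨t, ht, hx⟩
        set P : Finset ι := Finset.univ.filter (fun i => 0 < g i) with hP
        have hPne : P.Nonempty := ⟨j, by simp [hP, hgj]⟩
        obtain ⟨i₀, hi₀P, hi₀min⟩ := P.exists_min_image (fun i => t i / g i) hPne
        have hgi₀ : 0 < g i₀ := by simpa [hP] using hi₀P
        set lam := t i₀ / g i₀ with hlam
        have hlam0 : 0 ≤ lam := div_nonneg (ht i₀) hgi₀.le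
        set s : ι → ℝ := fun i => t i - lam * g i with hs
        have hs0 : ∀ i, 0 ≤ s i := by
          intro i
          by_cases hgi : 0 < g i
          · have h1 : lam ≤ t i / g i := hi₀min i (by simp [hP, hgi])
            have := (le_div_iff₀ hgi).mp h1
            simp only [hs]; nlinarith
          · push_neg at hgi
            have := mul_nonpos_of_nonneg_of_nonpos hlam0 hgi
            simp only [hs]; nlinarith [ht i]
        have hsz : s i₀ = 0 := by simp only [hs, hlam]; rw [div_mul_cancel₀ _ hgi₀.ne', sub_self]
        have hsum : ∑ i, s i • v i = x := by
          simp only [hs, sub_smul, Finset.sum_sub_distrib, mul_smul]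
          rw [← Finset.smul_sum, hg0, smul_zero, sub_zero, hx]
        refine ⟨i₀, fun p => s p.1, fun p => hs0 p.1, ?_⟩
        rw [sum_subtype_ne i₀ (fun k => s k • v k), Finset.sum_erase _ (by rw [hsz]; simp)]
        exact hsum
      · rintro ⟨i₀, t, ht, hx⟩
        set s : ι → ℝ := fun k => if h : k ≠ i₀ then t ⟨k, h⟩ else 0 with hs
        have hs0 : ∀ k, 0 ≤ s k := by
          intro k
          by_cases h : k ≠ i₀
          · rw [hs]; dsimp only; rw [dif_pos h]; exact ht _
          · rw [hs]; dsimp only; rw [dif_neg h]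
        refine ⟨s, hs0, ?_⟩
        have h1 : ∑ p : {k : ι // k ≠ i₀}, t p • v p.1 = ∑ p : {k : ι // k ≠ i₀}, s p.1 • v p.1 := by
          apply Finset.sum_congr rfl
          intro p _
          simp [hs, p.2]
        rw [← hx, h1, sum_subtype_ne i₀ (fun k => s k • v k),
          Finset.sum_erase _ (by simp [hs])]
    rw [hsub]
    apply isClosed_iUnion_of_finite
    intro i₀
    have hcard : Fintype.card {k : ι // k ≠ i₀} = n - 1 := by
      have := Fintype.card_subtype_compl (fun k : ι => k = i₀)
      simpa [Fintype.card_subtype_eq, hn] using this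
    exact ih (n - 1) (by omega) _ hcard

lemma coneSet_zero_mem {E : Type*} [AddCommMonoid E] [Module ℝ E] {ι : Type*} [Fintype ι]
    (v : ι → E) : (0:E) ∈ coneSet v :=
  ⟨fun _ => 0, fun _ => le_refl 0, by simp⟩

lemma coneSet_gen_mem {E : Type*} [AddCommMonoid E] [Module ℝ E] {ι : Type*} [Fintype ι]
    [DecidableEq ι] (v : ι → E) (i : ι) : v i ∈ coneSet v := by
  refine ⟨fun k => if k = i then 1 else 0, fun k => by dsimp only; split <;> norm_num, ?_⟩
  rw [Finset.sum_eq_single i]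
  · simp
  · intro k _ hk; simp [hk]
  · simp

lemma coneSet_smul_mem {E : Type*} [AddCommMonoid E] [Module ℝ E] {ι : Type*} [Fintype ι]
    (v : ι → E) {x : E} (hx : x ∈ coneSet v) {τ : ℝ} (hτ : 0 ≤ τ) : τ • x ∈ coneSet v := by
  obtain ⟨t, ht, hsum⟩ := hx
  refine ⟨fun i => τ * t i, fun i => mul_nonneg hτ (ht i), ?_⟩
  rw [← hsum, Finset.smul_sum]
  simp [mul_smul]

lemma coneSet_convex {E : Type*} [AddCommGroup E] [Module ℝ E] {ι : Type*} [Fintype ι]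
    (v : ι → E) : Convex ℝ (coneSet v) := by
  rintro x ⟨t, ht, hx⟩ y ⟨s, hs, hy⟩ a b ha hb _
  refine ⟨fun i => a * t i + b * s i, fun i => add_nonneg (mul_nonneg ha (ht i)) (mul_nonneg hb (hs i)), ?_⟩
  simp only [add_smul, Finset.sum_add_distrib, mul_smul]
  rw [← Finset.smul_sum, ← Finset.smul_sum, hx, hy]

lemma coneSet_separation {E : Type*} [NormedAddCommGroup E] [NormedSpace ℝ E]
    [FiniteDimensional ℝ E] {ι : Type*} [Fintype ι] [DecidableEq ι] (v : ι → E) (z : E)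
    (hz : z ∉ coneSet v) : ∃ f : E →L[ℝ] ℝ, (∀ i, f (v i) ≤ 0) ∧ 0 < f z := by
  obtain ⟨f, u, hfS, hfz⟩ := geometric_hahn_banach_closed_point
    (coneSet_convex v) (coneSet_closed v) hz
  have hu : 0 < u := by simpa using hfS 0 (coneSet_zero_mem v)
  refine ⟨f, ?_, lt_trans hu hfz⟩
  intro i
  by_contra h
  push_neg at h
  have hτ : (0:ℝ) ≤ (u + 1) / f (v i) := by positivity
  have h1 := hfS _ (coneSet_smul_mem v (coneSet_gen_mem v i) hτ)
  rw [map_smul, smul_eq_mul, div_mul_cancel₀ _ (ne_of_gt h)] at h1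
  linarith

noncomputable section OTAux

variable {N : ℕ} {X : Fin N → Type*} [∀ i, Fintype (X i)] [∀ i, DecidableEq (X i)]

/-- the constraint matrix column for assignment x -/
def otA (x : ∀ i, X i) : (Σ i, X i) → ℝ := fun r => if x r.1 = r.2 then 1 else 0

lemma otl_marg_iff (ρ : ∀ i, X i → ℝ) (γ : (∀ i, X i) → ℝ) :
    (∀ (i : Fin N) (a : X i), (∑ x : ∀ j, X j, if x i = a then γ x else 0) = ρ i a) ↔
    ∑ x : ∀ j, X j, γ x • otA x = (fun r : Σ i, X i => ρ r.1 r.2) := by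
  rw [funext_iff]
  constructor
  · intro h r
    rw [Finset.sum_apply]
    simp only [otA, Pi.smul_apply, smul_eq_mul, mul_boole]
    exact h r.1 r.2
  · intro h i a
    have := h ⟨i, a⟩
    rw [Finset.sum_apply] at this
    simpa only [otA, Pi.smul_apply, smul_eq_mul, mul_boole] using this

lemma otl_prod_marg (ρ : ∀ i, X i → ℝ) (hρ1 : ∀ i, ∑ a, ρ i a = 1) (i : Fin N) (a : X i) :
    (∑ x : ∀ j, X j, if x i = a then ∏ j, ρ j (x j) else 0) = ρ i a := by
  classical
  set h : ∀ j, X j → ℝ :=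
    fun j b => if (⟨j, b⟩ : Σ k, X k) = ⟨i, a⟩ ∨ j ≠ i then ρ j b else 0 with hh
  have claim1 : ∀ x : ∀ j, X j,
      (if x i = a then ∏ j, ρ j (x j) else 0) = ∏ j, h j (x j) := by
    intro x
    by_cases hxa : x i = a
    · rw [if_pos hxa]
      apply Finset.prod_congr rfl
      intro j _
      rw [hh]
      dsimp only
      rw [if_pos]
      by_cases hji : j = i
      · subst hji; left; rw [hxa]
      · right; exact hji
    · rw [if_neg hxa]
      rw [eq_comm]
      apply Finset.prod_eq_zero (Finset.mem_univ i)
      rw [hh]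
      dsimp only
      rw [if_neg]
      rintro (hc | hc)
      · exact hxa (by simpa using hc)
      · exact hc rfl
  calc (∑ x : ∀ j, X j, if x i = a then ∏ j, ρ j (x j) else 0)
      = ∑ x : ∀ j, X j, ∏ j, h j (x j) := Finset.sum_congr rfl fun x _ => claim1 x
    _ = ∏ j, ∑ b, h j b := by
        rw [Finset.prod_univ_sum]
        rw [← Fintype.piFinset_univ]
    _ = ρ i a := by
        rw [Finset.prod_eq_single i]
        · have : ∀ b : X i, h i b = if b = a then ρ i b else 0 := by
            intro b
            rw [hh]; dsimp only
            by_cases hba : b = a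
            · rw [if_pos (by left; rw [hba]), if_pos hba]
            · rw [if_neg, if_neg hba]
              rintro (hc | hc)
              · exact hba (by simpa using hc)
              · exact hc rfl
          rw [Finset.sum_congr rfl fun b _ => this b]
          simp
        · intro j _ hji
          have : ∀ b : X j, h j b = ρ j b := by
            intro b; rw [hh]; dsimp only; rw [if_pos (Or.inr hji)]
          rw [Finset.sum_congr rfl fun b _ => this b, hρ1 j]
        · intro hc; exact absurd (Finset.mem_univ i) hc

end OTAux

noncomputable section OTAux3

variable {N : ℕ} {X : Fin N → Type*} [∀ i, Fintype (X i)] [∀ i, DecidableEq (X i)]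
  [∀ i, Nonempty (X i)]

lemma otl_primal_attained (hN : 2 ≤ N) (ρ : ∀ i, X i → ℝ) (hρ0 : ∀ i a, 0 ≤ ρ i a)
    (hρ1 : ∀ i, ∑ a, ρ i a = 1) (c : (∀ i, X i) → ℝ) :
    ∃ γ : (∀ i, X i) → ℝ, ((∀ x, 0 ≤ γ x) ∧
      (∀ (i : Fin N) (a : X i), (∑ x : ∀ j, X j, if x i = a then γ x else 0) = ρ i a)) ∧
      ∀ γ' : (∀ i, X i) → ℝ, ((∀ x, 0 ≤ γ' x) ∧
        (∀ (i : Fin N) (a : X i), (∑ x : ∀ j, X j, if x i = a then γ' x else 0) = ρ i a)) →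
        (∑ x : ∀ j, X j, γ x * c x) ≤ ∑ x : ∀ j, X j, γ' x * c x := by
  classical
  set G : Set ((∀ i, X i) → ℝ) := {γ | (∀ x, 0 ≤ γ x) ∧
    (∀ (i : Fin N) (a : X i), (∑ x : ∀ j, X j, if x i = a then γ x else 0) = ρ i a)} with hG
  have hne : G.Nonempty := by
    refine ⟨fun x => ∏ j, ρ j (x j), fun x => Finset.prod_nonneg fun j _ => hρ0 j (x j), ?_⟩
    intro i a
    exact otl_prod_marg ρ hρ1 i a
  have hGclosed : IsClosed G := by
    have h1 : IsClosed {γ : (∀ i, X i) → ℝ | ∀ x, 0 ≤ γ x} := by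
      have : {γ : (∀ i, X i) → ℝ | ∀ x, 0 ≤ γ x}
          = ⋂ x, (fun γ : (∀ i, X i) → ℝ => γ x) ⁻¹' Set.Ici 0 := by ext γ; simp
      rw [this]
      exact isClosed_iInter fun x => isClosed_Ici.preimage (continuous_apply x)
    have h2 : IsClosed {γ : (∀ i, X i) → ℝ |
        ∀ (i : Fin N) (a : X i), (∑ x : ∀ j, X j, if x i = a then γ x else 0) = ρ i a} := by
      have : {γ : (∀ i, X i) → ℝ |
          ∀ (i : Fin N) (a : X i), (∑ x : ∀ j, X j, if x i = a then γ x else 0) = ρ i a}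
          = ⋂ (i : Fin N), ⋂ (a : X i),
            (fun γ : (∀ i, X i) → ℝ => ∑ x : ∀ j, X j, if x i = a then γ x else 0) ⁻¹' {ρ i a} := by
        ext γ; simp
      rw [this]
      refine isClosed_iInter fun i => isClosed_iInter fun a => ?_
      refine IsClosed.preimage ?_ isClosed_singleton
      have : (fun γ : (∀ i, X i) → ℝ => ∑ x : ∀ j, X j, if x i = a then γ x else 0)
          = fun γ => ∑ x : ∀ j, X j, (if x i = a then (1:ℝ) else 0) * γ x := by
        funext γ; apply Finset.sum_congr rfl; intro x _; rw [boole_mul]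
      rw [this]
      exact continuous_finset_sum _ fun x _ => (continuous_const.mul (continuous_apply x))
    have : G = {γ : (∀ i, X i) → ℝ | ∀ x, 0 ≤ γ x} ∩ _ := rfl
    exact h1.inter h2
  have hGsub : G ⊆ Set.Icc (0 : (∀ i, X i) → ℝ) 1 := by
    rintro γ ⟨hγ0, hγm⟩
    constructor
    · intro x; exact hγ0 x
    · intro x
      have i0 : Fin N := ⟨0, by omega⟩
      calc γ x ≤ ∑ x' : ∀ j, X j, if x' i0 = x i0 then γ x' else 0 := by
            refine le_trans (le_of_eq ?_) (Finset.single_le_sum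
              (f := fun x' => if x' i0 = x i0 then γ x' else 0)
              (fun x' _ => by split; exacts [hγ0 x', le_refl 0])
              (Finset.mem_univ x))
            rw [if_pos rfl]
        _ = ρ i0 (x i0) := hγm i0 (x i0)
        _ ≤ ∑ a, ρ i0 a := Finset.single_le_sum (fun a _ => hρ0 i0 a) (Finset.mem_univ _)
        _ = 1 := hρ1 i0
  have hGcompact : IsCompact G := (isCompact_Icc).of_isClosed_subset hGclosed hGsub
  have hcont : Continuous (fun γ : (∀ i, X i) → ℝ => ∑ x : ∀ j, X j, γ x * c x) :=
    continuous_finset_sum _ fun x _ => (continuous_apply x).mul continuous_const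
  obtain ⟨γ, hγG, hγmin⟩ := hGcompact.exists_isMinOn hne hcont.continuousOn
  exact ⟨γ, hγG, fun γ' hγ' => hγmin hγ'⟩

lemma otl_weak (ρ : ∀ i, X i → ℝ) (c : (∀ i, X i) → ℝ) (γ : (∀ i, X i) → ℝ)
    (hγ0 : ∀ x, 0 ≤ γ x)
    (hγm : ∀ (i : Fin N) (a : X i), (∑ x : ∀ j, X j, if x i = a then γ x else 0) = ρ i a)
    (u : ∀ i, X i → ℝ) (hu : ∀ x : ∀ j, X j, ∑ i, u i (x i) ≤ c x) :
    (∑ i, ∑ a : X i, u i a * ρ i a) ≤ ∑ x : ∀ j, X j, γ x * c x := by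
  classical
  have key : (∑ i, ∑ a : X i, u i a * ρ i a)
      = ∑ x : ∀ j, X j, γ x * ∑ i, u i (x i) := by
    calc (∑ i, ∑ a : X i, u i a * ρ i a)
        = ∑ i, ∑ a : X i, ∑ x : ∀ j, X j, (if x i = a then u i a * γ x else 0) := by
          refine Finset.sum_congr rfl fun i _ => Finset.sum_congr rfl fun a _ => ?_
          rw [← hγm i a, Finset.mul_sum]
          refine Finset.sum_congr rfl fun x _ => ?_
          rw [mul_ite, mul_zero]
      _ = ∑ x : ∀ j, X j, ∑ i, ∑ a : X i, (if x i = a then u i a * γ x else 0) := by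
          rw [Finset.sum_comm]
          refine Finset.sum_congr rfl fun i _ => Finset.sum_comm
      _ = ∑ x : ∀ j, X j, ∑ i, u i (x i) * γ x := by
          refine Finset.sum_congr rfl fun x _ => Finset.sum_congr rfl fun i _ => ?_
          rw [Finset.sum_ite_eq univ (x i) (fun a => u i a * γ x)]
          rw [if_pos (Finset.mem_univ _)]
      _ = ∑ x : ∀ j, X j, γ x * ∑ i, u i (x i) := by
          refine Finset.sum_congr rfl fun x _ => ?_
          rw [Finset.mul_sum]
          refine Finset.sum_congr rfl fun i _ => mul_comm _ _
  rw [key]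
  exact Finset.sum_le_sum fun x _ => mul_le_mul_of_nonneg_left (hu x) (hγ0 x)

end OTAux3

noncomputable section OTAux4

variable {N : ℕ} {X : Fin N → Type*} [∀ i, Fintype (X i)] [∀ i, DecidableEq (X i)]
  [∀ i, Nonempty (X i)]

lemma otl_normalize (hN : 2 ≤ N) (ρ : ∀ i, X i → ℝ) (hρ0 : ∀ i a, 0 ≤ ρ i a)
    (hρ1 : ∀ i, ∑ a, ρ i a = 1) (c : (∀ i, X i) → ℝ) (mc Mp K : ℝ)
    (hmc : ∀ x, mc ≤ c x) (hMp : ∀ x, c x ≤ Mp) (hMp0 : 0 ≤ Mp)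
    (hK : K = N * Mp - mc + 1)
    (u : ∀ i, X i → ℝ) (hu : ∀ x : ∀ j, X j, ∑ i, u i (x i) ≤ c x) :
    ∃ w : ∀ i, X i → ℝ, (∀ x : ∀ j, X j, ∑ i, w i (x i) ≤ c x) ∧
      (∀ i a, -K ≤ w i a ∧ w i a ≤ Mp) ∧
      (∑ i, ∑ a : X i, u i a * ρ i a) ≤ ∑ i, ∑ a : X i, w i a * ρ i a := by
  classical
  have hNR : (2:ℝ) ≤ (N:ℝ) := by exact_mod_cast hN
  have hmcMp : mc ≤ Mp := le_trans (hmc (Classical.arbitrary _)) (hMp _)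
  have hK0 : 1 ≤ K := by nlinarith
  set i₀ : Fin N := ⟨0, by omega⟩ with hi₀
  set M : Fin N → ℝ := fun i => Finset.univ.sup' Finset.univ_nonempty (u i) with hMdef
  have hM : ∀ i a, u i a ≤ M i := fun i a => Finset.le_sup' (u i) (Finset.mem_univ a)
  have hamax : ∀ j, ∃ b : X j, M j = u j b := by
    intro j
    obtain ⟨b, _, hb⟩ := Finset.exists_mem_eq_sup' Finset.univ_nonempty (u j)
    exact ⟨b, hb⟩
  set amax : ∀ j, X j := fun j => (hamax j).choose with hamaxdef
  have ham : ∀ j, M j = u j (amax j) := fun j => (hamax j).choose_spec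
  set S : ℝ := ∑ j ∈ Finset.univ.erase i₀, M j with hS
  set sh : Fin N → ℝ := fun i => if i = i₀ then S else -(M i) with hsh
  have hshift : ∑ i, sh i = 0 := by
    rw [← Finset.add_sum_erase _ sh (Finset.mem_univ i₀)]
    rw [hsh]
    dsimp only
    rw [if_pos rfl]
    rw [Finset.sum_congr rfl (fun j hj => if_neg (Finset.ne_of_mem_erase hj))]
    rw [Finset.sum_neg_distrib, ← hS]
    ring
  set w1 : ∀ i, X i → ℝ := fun i a => u i a + sh i with hw1
  have hw1sum : ∀ x : ∀ j, X j, ∑ i, w1 i (x i) = ∑ i, u i (x i) := by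
    intro x
    rw [hw1]
    dsimp only
    rw [Finset.sum_add_distrib, hshift, add_zero]
  have hw1le : ∀ (i : Fin N) (a : X i), i ≠ i₀ → w1 i a ≤ 0 := by
    intro i a hi
    rw [hw1]; dsimp only; rw [hsh]; dsimp only; rw [if_neg hi]
    have := hM i a; linarith
  have hw1i₀ : ∀ a : X i₀, w1 i₀ a ≤ Mp := by
    intro a
    set x : ∀ j, X j := Function.update amax i₀ a with hx
    have hxi₀ : x i₀ = a := Function.update_self i₀ a amax
    have hxj : ∀ j, j ≠ i₀ → x j = amax j := fun j hj => Function.update_of_ne hj a amax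
    have h1 : ∑ i, w1 i (x i) = w1 i₀ a := by
      rw [← Finset.add_sum_erase _ (fun i => w1 i (x i)) (Finset.mem_univ i₀)]
      rw [Finset.sum_congr rfl (fun j hj => ?_), Finset.sum_const_zero, add_zero, hxi₀]
      have hj' := Finset.ne_of_mem_erase hj
      rw [hw1]; dsimp only; rw [hsh]; dsimp only; rw [if_neg hj', hxj j hj', ← ham j]
      ring
    have h2 : ∑ i, w1 i (x i) ≤ Mp := by
      rw [hw1sum x]; exact le_trans (hu x) (hMp x)
    linarith [h1 ▸ h2]
  have hw1Mp : ∀ (i : Fin N) (a : X i), w1 i a ≤ Mp := by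
    intro i a
    by_cases hi : i = i₀
    · subst hi; exact hw1i₀ a
    · exact le_trans (hw1le i a hi) hMp0
  set w : ∀ i, X i → ℝ := fun i a => max (w1 i a) (-K) with hw
  refine ⟨w, ?_, ?_, ?_⟩
  · -- feasibility
    intro x
    by_cases hall : ∀ i, -K ≤ w1 i (x i)
    · have : ∀ i, w i (x i) = w1 i (x i) := fun i => max_eq_left (hall i)
      rw [Finset.sum_congr rfl (fun i _ => this i), hw1sum x]
      exact hu x
    · push_neg at hall
      obtain ⟨i', hi'⟩ := hall
      have hwi' : w i' (x i') = -K := max_eq_right hi'.le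
      have hcard : (Finset.univ.erase i').card = N - 1 := by
        rw [Finset.card_erase_of_mem (Finset.mem_univ i')]
        simp
      have hbound : ∑ i, w i (x i) ≤ -K + (N - 1 : ℝ) * Mp := by
        rw [← Finset.add_sum_erase _ (fun i => w i (x i)) (Finset.mem_univ i')]
        rw [hwi']
        have : ∑ i ∈ Finset.univ.erase i', w i (x i)
            ≤ ∑ i ∈ Finset.univ.erase i', Mp := by
          refine Finset.sum_le_sum fun i _ => ?_
          exact max_le (hw1Mp i (x i)) (by linarith)
        rw [Finset.sum_const, hcard] at this
        have hc' : ((N-1 : ℕ) : ℝ) = (N:ℝ) - 1 := by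
          have : (1:ℕ) ≤ N := by omega
          push_cast [this]; ring
        rw [nsmul_eq_mul, hc'] at this
        linarith
      have : -K + (N - 1 : ℝ) * Mp ≤ mc - 1 := by nlinarith
      linarith [hmc x]
  · intro i a
    constructor
    · exact le_max_right _ _
    · exact max_le (hw1Mp i a) (by linarith)
  · -- value does not decrease
    have step1 : ∑ i, ∑ a : X i, w1 i a * ρ i a
        = (∑ i, ∑ a : X i, u i a * ρ i a) + ∑ i, sh i := by
      rw [← Finset.sum_add_distrib]
      refine Finset.sum_congr rfl fun i _ => ?_
      have : ∀ a ∈ Finset.univ, w1 i a * ρ i a = u i a * ρ i a + sh i * ρ i a := by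
        intro a _; rw [hw1]; ring
      rw [Finset.sum_congr rfl this, Finset.sum_add_distrib, ← Finset.mul_sum, hρ1 i, mul_one]
    have step2 : (∑ i, ∑ a : X i, u i a * ρ i a) = ∑ i, ∑ a : X i, w1 i a * ρ i a := by
      rw [step1, hshift, add_zero]
    rw [step2]
    refine Finset.sum_le_sum fun i _ => Finset.sum_le_sum fun a _ => ?_
    exact mul_le_mul_of_nonneg_right (le_max_left _ _) (hρ0 i a)

end OTAux4

noncomputable section OTAux5
variable {N : ℕ} {X : Fin N → Type*} [∀ i, Fintype (X i)] [∀ i, DecidableEq (X i)]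
  [∀ i, Nonempty (X i)]

lemma otl_dual_attained (hN : 2 ≤ N) (ρ : ∀ i, X i → ℝ) (c : (∀ i, X i) → ℝ)
    (mc Mp K : ℝ) (hmc : ∀ x, mc ≤ c x) (hMp0 : 0 ≤ Mp) (hmcMp : mc ≤ Mp)
    (hK : K = N * Mp - mc + 1) :
    ∃ u : ∀ i, X i → ℝ, ((∀ x : ∀ j, X j, ∑ i, u i (x i) ≤ c x) ∧
        (∀ i a, -K ≤ u i a ∧ u i a ≤ Mp)) ∧
      ∀ u' : ∀ i, X i → ℝ, ((∀ x : ∀ j, X j, ∑ i, u' i (x i) ≤ c x) ∧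
        (∀ i a, -K ≤ u' i a ∧ u' i a ≤ Mp)) →
      (∑ i, ∑ a : X i, u' i a * ρ i a) ≤ ∑ i, ∑ a : X i, u i a * ρ i a := by
  classical
  have hNR : (2:ℝ) ≤ (N:ℝ) := by exact_mod_cast hN
  have hK1 : 1 ≤ K := by nlinarith
  set D : Set (∀ i, X i → ℝ) := {u | (∀ x : ∀ j, X j, ∑ i, u i (x i) ≤ c x) ∧
    (∀ i a, -K ≤ u i a ∧ u i a ≤ Mp)} with hD
  set i₀ : Fin N := ⟨0, by omega⟩ with hi₀
  have hne : D.Nonempty := by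
    refine ⟨fun i _ => if i = i₀ then mc else 0, ?_, ?_⟩
    · intro x
      have : ∑ i, (if i = i₀ then mc else (0:ℝ)) = mc := by
        rw [Finset.sum_ite_eq' Finset.univ i₀ (fun _ => mc), if_pos (Finset.mem_univ _)]
      rw [this]
      exact hmc x
    · intro i a
      dsimp only
      split
      · constructor <;> nlinarith
      · constructor <;> nlinarith
  have hclosed : IsClosed D := by
    have h1 : IsClosed {u : ∀ i, X i → ℝ | ∀ x : ∀ j, X j, ∑ i, u i (x i) ≤ c x} := by
      have : {u : ∀ i, X i → ℝ | ∀ x : ∀ j, X j, ∑ i, u i (x i) ≤ c x}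
          = ⋂ x : ∀ j, X j, {u : ∀ i, X i → ℝ | ∑ i, u i (x i) ≤ c x} := by ext u; simp
      rw [this]
      refine isClosed_iInter fun x => ?_
      exact isClosed_le (continuous_finset_sum _ fun i _ =>
        (continuous_apply (x i)).comp (continuous_apply i)) continuous_const
    have h2 : IsClosed {u : ∀ i, X i → ℝ | ∀ i a, -K ≤ u i a ∧ u i a ≤ Mp} := by
      have : {u : ∀ i, X i → ℝ | ∀ i a, -K ≤ u i a ∧ u i a ≤ Mp}
          = ⋂ (i : Fin N), ⋂ (a : X i),
            (fun u : ∀ i, X i → ℝ => u i a) ⁻¹' Set.Icc (-K) Mp := by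
        ext u; simp [Set.mem_Icc]
      rw [this]
      exact isClosed_iInter fun i => isClosed_iInter fun a =>
        isClosed_Icc.preimage ((continuous_apply a).comp (continuous_apply i))
    exact h1.inter h2
  have hsub : D ⊆ Set.Icc (fun _ _ => -K) (fun _ _ => Mp) := by
    rintro u ⟨_, hbox⟩
    constructor
    · intro i a; exact (hbox i a).1
    · intro i a; exact (hbox i a).2
  have hcompact : IsCompact D := (isCompact_Icc).of_isClosed_subset hclosed hsub
  have hcont : Continuous (fun u : ∀ i, X i → ℝ => ∑ i, ∑ a : X i, u i a * ρ i a) :=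
    continuous_finset_sum _ fun i _ => continuous_finset_sum _ fun a _ =>
      (by fun_prop)
  obtain ⟨u, huD, humax⟩ := hcompact.exists_isMaxOn hne hcont.continuousOn
  exact ⟨u, huD, fun u' hu' => humax hu'⟩

end OTAux5

noncomputable section OTAux6
variable {N : ℕ} {X : Fin N → Type*} [∀ i, Fintype (X i)] [∀ i, DecidableEq (X i)]

/-- indicator basis vector -/
def otE (r : Σ i, X i) : (Σ i, X i) → ℝ := fun s => if s = r then 1 else 0

lemma otl_strong (ρ : ∀ i, X i → ℝ) (c : (∀ i, X i) → ℝ) (γ : (∀ i, X i) → ℝ)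
    (hγ0 : ∀ x, 0 ≤ γ x)
    (hγm : ∀ (i : Fin N) (a : X i), (∑ x : ∀ j, X j, if x i = a then γ x else 0) = ρ i a)
    (hopt : ∀ γ' : (∀ i, X i) → ℝ, (∀ x, 0 ≤ γ' x) →
      (∀ (i : Fin N) (a : X i), (∑ x : ∀ j, X j, if x i = a then γ' x else 0) = ρ i a) →
      (∑ x : ∀ j, X j, γ x * c x) ≤ ∑ x : ∀ j, X j, γ' x * c x)
    (ε : ℝ) (hε : 0 < ε) :
    ∃ u : ∀ i, X i → ℝ, (∀ x : ∀ j, X j, ∑ i, u i (x i) ≤ c x) ∧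
      (∑ x : ∀ j, X j, γ x * c x) - ε < ∑ i, ∑ a : X i, u i a * ρ i a := by
  classical
  set p : ℝ := ∑ x : ∀ j, X j, γ x * c x with hp
  set b : (Σ i, X i) → ℝ := fun r => ρ r.1 r.2 with hb
  set v : ((∀ j, X j) ⊕ Unit) → ((Σ i, X i) → ℝ) × ℝ :=
    Sum.elim (fun x => (otA x, c x)) (fun _ => (0, 1)) with hv
  set z : ((Σ i, X i) → ℝ) × ℝ := (b, p - ε) with hz
  have hzout : z ∉ coneSet v := by
    rintro ⟨t, ht, hsum⟩
    rw [Fintype.sum_sum_type] at hsum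
    have hunit : ∑ y : Unit, t (Sum.inr y) • v (Sum.inr y)
        = t (Sum.inr ()) • ((0 : (Σ i, X i) → ℝ), (1:ℝ)) := by
      rw [Fintype.sum_unique]; rfl
    rw [hunit] at hsum
    have h1 : ∑ x : ∀ j, X j, t (Sum.inl x) • otA x = b := by
      have := congrArg Prod.fst hsum
      simpa [Prod.fst_sum, hv, hz] using this
    have h2 : (∑ x : ∀ j, X j, t (Sum.inl x) * c x) + t (Sum.inr ()) = p - ε := by
      have := congrArg Prod.snd hsum
      simpa [Prod.snd_sum, smul_eq_mul, hv, hz] using this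
    have hfeas := (otl_marg_iff ρ (fun x => t (Sum.inl x))).mpr h1
    have := hopt (fun x => t (Sum.inl x)) (fun x => ht (Sum.inl x)) hfeas
    have htr := ht (Sum.inr ())
    have h3 : p ≤ ∑ x : ∀ j, X j, t (Sum.inl x) * c x := this
    linarith
  obtain ⟨f, hgen, hfz⟩ := coneSet_separation v z hzout
  set β : ℝ := f ((0 : (Σ i, X i) → ℝ), (1:ℝ)) with hβ
  have hβ0 : β ≤ 0 := hgen (Sum.inr ())
  have hsplit : ∀ (w : (Σ i, X i) → ℝ) (r : ℝ), f (w, r) = f (w, 0) + r * β := by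
    intro w r
    have hpair : ((w, r) : ((Σ i, X i) → ℝ) × ℝ)
        = (w, 0) + r • ((0 : (Σ i, X i) → ℝ), (1:ℝ)) := by
      rw [Prod.ext_iff]; constructor <;> simp
    rw [hpair, map_add, map_smul, smul_eq_mul]
  have hgen' : ∀ x : ∀ j, X j, f (otA x, 0) + c x * β ≤ 0 := by
    intro x
    have := hgen (Sum.inl x)
    rw [hv] at this
    rw [← hsplit]
    exact this
  -- decomposition of otA and b in terms of otE
  have hAe : ∀ x : ∀ j, X j, otA x = ∑ i, otE (⟨i, x i⟩ : Σ i, X i) := by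
    intro x
    funext s
    rw [Finset.sum_apply]
    rcases s with ⟨j, aj⟩
    rw [Finset.sum_eq_single j]
    · simp only [otA, otE]
      by_cases h : x j = aj
      · rw [if_pos h, if_pos (by rw [h])]
      · rw [if_neg h, if_neg]
        intro hc
        obtain ⟨-, hc2⟩ := Sigma.mk.inj_iff.mp hc
        exact h (eq_of_heq hc2).symm
    · intro i _ hij
      simp only [otE]
      rw [if_neg]
      intro hc
      exact hij (Sigma.mk.inj_iff.mp hc).1.symm
    · intro hc; exact absurd (Finset.mem_univ j) hc
  have hbe : b = ∑ r : Σ i, X i, b r • otE r := by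
    funext s
    rw [Finset.sum_apply]
    have : ∀ r : Σ i, X i, (b r • otE r) s = if s = r then b r else 0 := by
      intro r
      simp only [otE, Pi.smul_apply, smul_eq_mul, mul_ite, mul_one, mul_zero]
    rw [Finset.sum_congr rfl fun r _ => this r]
    rw [Finset.sum_ite_eq Finset.univ s b, if_pos (Finset.mem_univ s)]
  have hAe2 : ∀ x : ∀ j, X j, f (otA x, 0) = ∑ i, f (otE (⟨i, x i⟩ : Σ i, X i), 0) := by
    intro x
    have hpair : ((otA x, (0:ℝ)) : ((Σ i, X i) → ℝ) × ℝ)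
        = ∑ i, ((otE (⟨i, x i⟩ : Σ i, X i), (0:ℝ)) : ((Σ i, X i) → ℝ) × ℝ) := by
      rw [Prod.ext_iff]
      constructor
      · rw [Prod.fst_sum]; exact hAe x
      · rw [Prod.snd_sum]; simp
    rw [hpair, map_sum]
  have hbe2 : f (b, 0) = ∑ r : Σ i, X i, b r * f (otE r, 0) := by
    have hpair : ((b, (0:ℝ)) : ((Σ i, X i) → ℝ) × ℝ)
        = ∑ r : Σ i, X i, (b r • ((otE r, (0:ℝ)) : ((Σ i, X i) → ℝ) × ℝ)) := by
      rw [Prod.ext_iff]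
      constructor
      · rw [Prod.fst_sum]
        exact hbe.trans (Finset.sum_congr rfl fun r _ => rfl)
      · rw [Prod.snd_sum]; simp
    rw [hpair, map_sum]
    exact Finset.sum_congr rfl fun r _ => by rw [map_smul, smul_eq_mul]
  rcases eq_or_lt_of_le hβ0 with hβz | hβneg
  · -- β = 0 : contradiction
    exfalso
    have hfeas : ∑ x : ∀ j, X j, γ x • otA x = b := (otl_marg_iff ρ γ).mp hγm
    have hpair : ((b, (0:ℝ)) : ((Σ i, X i) → ℝ) × ℝ)
        = ∑ x : ∀ j, X j, γ x • ((otA x, (0:ℝ)) : ((Σ i, X i) → ℝ) × ℝ) := by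
      rw [Prod.ext_iff]
      constructor
      · rw [Prod.fst_sum]; exact hfeas.symm
      · rw [Prod.snd_sum]; simp
    have hfb : f (b, 0) ≤ 0 := by
      rw [hpair, map_sum]
      refine Finset.sum_nonpos fun x _ => ?_
      rw [map_smul, smul_eq_mul]
      have := hgen' x
      rw [hβz, mul_zero, add_zero] at this
      exact mul_nonpos_of_nonneg_of_nonpos (hγ0 x) this
    have : f z = f (b, 0) := by
      rw [hz, hsplit, hβz, mul_zero, add_zero]
    linarith [hfz, this ▸ hfb]
  · -- β < 0 : extract dual solution
    have hβpos : 0 < -β := by linarith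
    set u : ∀ i, X i → ℝ := fun i a => f (otE (⟨i, a⟩ : Σ i, X i), 0) / (-β) with hu
    refine ⟨u, ?_, ?_⟩
    · intro x
      have h1 : f (otA x, 0) ≤ c x * (-β) := by
        have := hgen' x
        nlinarith
      have h2 : ∑ i, u i (x i) = f (otA x, 0) / (-β) := by
        rw [hAe2 x, Finset.sum_div]
      rw [h2]
      exact (div_le_iff₀ hβpos).mpr h1
    · have hval : (∑ i, ∑ a : X i, u i a * ρ i a) = f (b, 0) / (-β) := by
        have hsig : (∑ i, ∑ a : X i, u i a * ρ i a)
            = ∑ r : Σ i, X i, u r.1 r.2 * ρ r.1 r.2 := by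
          rw [← Finset.univ_sigma_univ, Finset.sum_sigma]
        rw [hsig, hbe2, Finset.sum_div]
        refine Finset.sum_congr rfl fun r _ => ?_
        rw [hu, hb]
        dsimp only
        ring
      have hzval : f z = f (b, 0) + (p - ε) * β := by rw [hz, hsplit]
      have : (p - ε) * (-β) < f (b, 0) := by nlinarith [hfz]
      rw [hval]
      exact (lt_div_iff₀ hβpos).mpr this
end OTAux6

/-- finite linear programming duality for multimarginal optimal transport with
finitely many states: the minimum of ∫ c̃ dγ over couplings with prescribed marginals equals
the maximum of the dual linear functional over feasible potentials, both attained. -/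
theorem stmt9 (N : ℕ) (hN : 2 ≤ N) (X : Fin N → Type*)
    [∀ i, Fintype (X i)] [∀ i, DecidableEq (X i)] [∀ i, Nonempty (X i)]
    (ρ : ∀ i, X i → ℝ) (hρ0 : ∀ i a, 0 ≤ ρ i a) (hρ1 : ∀ i, ∑ a, ρ i a = 1)
    (c : (∀ i, X i) → ℝ) :
    ∃ (γ : (∀ i, X i) → ℝ) (u : ∀ i, X i → ℝ),
      (∀ x, 0 ≤ γ x) ∧
      (∀ (i : Fin N) (a : X i), (∑ x : ∀ j, X j, if x i = a then γ x else 0) = ρ i a) ∧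
      (∀ x : ∀ j, X j, ∑ i, u i (x i) ≤ c x) ∧
      (∑ x : ∀ j, X j, γ x * c x) = (∑ i, ∑ a : X i, u i a * ρ i a) ∧
      (∀ γ' : (∀ i, X i) → ℝ, (∀ x, 0 ≤ γ' x) →
        (∀ (i : Fin N) (a : X i), (∑ x : ∀ j, X j, if x i = a then γ' x else 0) = ρ i a) →
        (∑ x : ∀ j, X j, γ x * c x) ≤ ∑ x : ∀ j, X j, γ' x * c x) ∧
      (∀ u' : ∀ i, X i → ℝ, (∀ x : ∀ j, X j, ∑ i, u' i (x i) ≤ c x) →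
        (∑ i, ∑ a : X i, u' i a * ρ i a) ≤ ∑ i, ∑ a : X i, u i a * ρ i a) := by
  classical
  obtain ⟨γ, ⟨hγ0, hγm⟩, hγopt⟩ := otl_primal_attained hN ρ hρ0 hρ1 c
  have hγopt' : ∀ γ' : (∀ i, X i) → ℝ, (∀ x, 0 ≤ γ' x) →
      (∀ (i : Fin N) (a : X i), (∑ x : ∀ j, X j, if x i = a then γ' x else 0) = ρ i a) →
      (∑ x : ∀ j, X j, γ x * c x) ≤ ∑ x : ∀ j, X j, γ' x * c x :=
    fun γ' h0 hm => hγopt γ' ⟨h0, hm⟩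
  set mc : ℝ := Finset.univ.inf' Finset.univ_nonempty c with hmcdef
  set Mc : ℝ := Finset.univ.sup' Finset.univ_nonempty c with hMcdef
  set Mp : ℝ := max Mc 0 with hMpdef
  have hmc : ∀ x, mc ≤ c x := fun x => Finset.inf'_le c (Finset.mem_univ x)
  have hMp : ∀ x, c x ≤ Mp := fun x =>
    le_trans (Finset.le_sup' c (Finset.mem_univ x)) (le_max_left _ _)
  have hMp0 : (0:ℝ) ≤ Mp := le_max_right _ _
  have hmcMp : mc ≤ Mp := le_trans (hmc (Classical.arbitrary _)) (hMp _)
  set K : ℝ := N * Mp - mc + 1 with hKdef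
  obtain ⟨u, ⟨huf, hubox⟩, humax⟩ := otl_dual_attained hN ρ c mc Mp K hmc hMp0 hmcMp rfl
  have hdvle : (∑ i, ∑ a : X i, u i a * ρ i a) ≤ ∑ x : ∀ j, X j, γ x * c x :=
    otl_weak ρ c γ hγ0 hγm u huf
  have hdvge : (∑ x : ∀ j, X j, γ x * c x) ≤ ∑ i, ∑ a : X i, u i a * ρ i a := by
    by_contra h
    push_neg at h
    set ε : ℝ := (∑ x : ∀ j, X j, γ x * c x) - (∑ i, ∑ a : X i, u i a * ρ i a) with hεdef
    have hε : 0 < ε := by rw [hεdef]; linarith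
    obtain ⟨u1, hu1f, hu1v⟩ := otl_strong ρ c γ hγ0 hγm hγopt' ε hε
    obtain ⟨w, hwf, hwbox, hwv⟩ :=
      otl_normalize hN ρ hρ0 hρ1 c mc Mp K hmc hMp hMp0 rfl u1 hu1f
    have hwu := humax w ⟨hwf, hwbox⟩
    rw [hεdef] at hu1v
    linarith
  have heq : (∑ x : ∀ j, X j, γ x * c x) = ∑ i, ∑ a : X i, u i a * ρ i a :=
    le_antisymm hdvge hdvle
  refine ⟨γ, u, hγ0, hγm, huf, heq, hγopt', ?_⟩
  intro u' hu'
  exact le_trans (otl_weak ρ c γ hγ0 hγm u' hu') (le_of_eq heq)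
end
end
end

section
/- Let P be a probability measure on (ℝ³)^N with i-th marginals ν₁,…,ν_N, decomposed as P = λ₁P₁ + ⋯ + λ_N P_N + P_R where λᵢ ∈ (0,1] and λ₁|P₁| = ⋯ = λ_N|P_N|. Let νᵢᵏ denote the k-th marginal of λᵢPᵢ, and define P̃ᵢ = ν₁ⁱ ⊗ ν₂^{i+1} ⊗ ⋯ ⊗ ν_N^{i+N−1} (indices mod N), rescaled so that |P̃ᵢ| = λᵢ|Pᵢ|. Then P̃ := P_R + P̃₁ + ⋯ + P̃_N has the same marginals as P. -/
open MeasureTheory Filter Topology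
open scoped ENNReal

noncomputable section

lemma map_eval_pi' {ι : Type*} [Fintype ι] [DecidableEq ι] {α : ι → Type*} [∀ i, MeasurableSpace (α i)]
    (μ : ∀ i, Measure (α i)) [∀ i, SigmaFinite (μ i)] (k : ι) :
    Measure.map (fun x => x k) (Measure.pi μ) =
      (∏ j ∈ Finset.univ.erase k, μ j Set.univ) • μ k := by
  ext s hs
  rw [Measure.map_apply (measurable_pi_apply k) hs, Measure.smul_apply, smul_eq_mul]
  have h1 : (fun x : ∀ i, α i => x k) ⁻¹' s
      = Set.pi Set.univ (Function.update (fun i => (Set.univ : Set (α i))) k s) :=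
    Set.eval_preimage
  rw [h1, Measure.pi_pi]
  have h2 : ∀ j, μ j (Function.update (fun i => (Set.univ : Set (α i))) k s j)
      = Function.update (fun j => μ j Set.univ) k (μ k s) j := by
    intro j
    rcases eq_or_ne j k with rfl | h
    · simp [Function.update_self]
    · simp [Function.update_of_ne h]
  rw [Finset.prod_congr rfl (fun j _ => h2 j), Finset.prod_update_of_mem (Finset.mem_univ k)]
  rw [Finset.erase_eq, mul_comm]

lemma map_finset_sum_aux {α β : Type*} [MeasurableSpace α] [MeasurableSpace β]
    {ι : Type*} (t : Finset ι) (μ : ι → Measure α) {f : α → β} (hf : Measurable f) :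
    Measure.map f (∑ i ∈ t, μ i) = ∑ i ∈ t, Measure.map f (μ i) := by
  classical
  induction t using Finset.induction with
  | empty => simp
  | insert a t h ih => rw [Finset.sum_insert h, Finset.sum_insert h, Measure.map_add _ _ hf, ih]

/-- the swapping construction. If P = P_R + Σᵢ λᵢ Pᵢ with
λ₁|P₁| = ⋯ = λ_N|P_N| = m, and P̃ᵢ is the (mass-m normalized) product of the marginals
νᵏ of the pieces λ_j P_j taken with cyclically shifted indices, then
P̃ = P_R + Σᵢ P̃ᵢ has the same marginals as P. -/
theorem stmt14 (N : ℕ) (hN : 2 ≤ N)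
    (P PR : Measure (Fin N → E3)) (Ppart : Fin N → Measure (Fin N → E3))
    [IsProbabilityMeasure P] [IsFiniteMeasure PR] [∀ i, IsFiniteMeasure (Ppart i)]
    (lam : Fin N → ℝ≥0∞) (hlam : ∀ i, 0 < lam i ∧ lam i ≤ 1)
    (m : ℝ≥0∞) (hm : ∀ i, lam i * Ppart i Set.univ = m)
    (hdecomp : P = PR + ∑ i, lam i • Ppart i) :
    ∀ k : Fin N,
      Measure.map (fun x => x k)
        (PR + ∑ i : Fin N, (m ^ (N - 1))⁻¹ •
          Measure.pi (fun j : Fin N =>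
            Measure.map (fun x => x j) (lam (i + j) • Ppart (i + j)))) =
      Measure.map (fun x => x k) P := by
  intro k
  haveI : NeZero N := ⟨by omega⟩
  have hmeas : Measurable (fun x : Fin N → E3 => x k) := measurable_pi_apply k
  have hmass : ∀ i j : Fin N,
      Measure.map (fun x => x j) (lam (i + j) • Ppart (i + j)) Set.univ = m := by
    intro i j
    rw [Measure.map_apply (measurable_pi_apply j) MeasurableSet.univ, Set.preimage_univ,
      Measure.smul_apply, smul_eq_mul, hm]
  by_cases hm0 : m = 0
  · -- degenerate case: all pieces are zero
    have hzero : ∀ i : Fin N, lam i • Ppart i = 0 := by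
      intro i
      have h1 : lam i * Ppart i Set.univ = 0 := by rw [hm i, hm0]
      rcases mul_eq_zero.mp h1 with h | h
      · exact absurd h (hlam i).1.ne'
      · rw [Measure.measure_univ_eq_zero.mp h, smul_zero]
    have hpiz : ∀ i : Fin N,
        Measure.pi (fun j : Fin N =>
          Measure.map (fun x => x j) (lam (i + j) • Ppart (i + j))) = 0 := by
      intro i
      have : ∀ j : Fin N, Measure.map (fun x => x j) (lam (i + j) • Ppart (i + j)) = 0 := by
        intro j; rw [hzero (i + j), Measure.map_zero]
      have hf : (fun j : Fin N => Measure.map (fun x => x j) (lam (i + j) • Ppart (i + j)))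
          = fun _ => (0 : Measure E3) := funext this
      rw [hf]
      apply Measure.measure_univ_eq_zero.mp
      rw [Measure.pi_univ]
      exact Finset.prod_eq_zero (Finset.mem_univ k) rfl
    have hsum0 : (∑ i, lam i • Ppart i : Measure (Fin N → E3)) = 0 := by
      rw [Finset.sum_congr rfl (fun i _ => hzero i), Finset.sum_const, smul_zero]
    simp only [hpiz, smul_zero, Finset.sum_const, hdecomp, hsum0, add_zero]
  · -- main case
    have i0 : Fin N := ⟨0, by omega⟩
    have hmtop : m ≠ ⊤ := by
      rw [← hm i0]
      exact ENNReal.mul_ne_top (lt_of_le_of_lt (hlam i0).2 ENNReal.one_lt_top).ne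
        (measure_ne_top _ _)
    have hpow0 : m ^ (N - 1) ≠ 0 := pow_ne_zero _ hm0
    have hpowtop : m ^ (N - 1) ≠ ⊤ := ENNReal.pow_ne_top hmtop
    have hfin : ∀ i j : Fin N,
        IsFiniteMeasure (Measure.map (fun x => x j) (lam (i + j) • Ppart (i + j))) := by
      intro i j
      exact ⟨by rw [hmass i j]; exact hmtop.lt_top⟩
    have key : ∀ i : Fin N,
        Measure.map (fun x : Fin N → E3 => x k)
          ((m ^ (N - 1))⁻¹ • Measure.pi (fun j : Fin N =>
            Measure.map (fun x => x j) (lam (i + j) • Ppart (i + j)))) =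
        Measure.map (fun x : Fin N → E3 => x k) (lam (i + k) • Ppart (i + k)) := by
      intro i
      haveI := hfin i
      rw [Measure.map_smul, map_eval_pi']
      have hprod : (∏ j ∈ Finset.univ.erase k,
          Measure.map (fun x => x j) (lam (i + j) • Ppart (i + j)) Set.univ) = m ^ (N - 1) := by
        rw [Finset.prod_congr rfl (fun j _ => hmass i j), Finset.prod_const,
          Finset.card_erase_of_mem (Finset.mem_univ k), Finset.card_univ, Fintype.card_fin]
      rw [hprod, smul_smul, ENNReal.inv_mul_cancel hpow0 hpowtop, one_smul]
    rw [hdecomp, Measure.map_add _ _ hmeas, Measure.map_add _ _ hmeas,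
      map_finset_sum_aux _ _ hmeas, map_finset_sum_aux _ _ hmeas]
    congr 1
    rw [Finset.sum_congr rfl (fun i _ => key i)]
    exact Fintype.sum_equiv (Equiv.addRight k) _ _ (fun i => rfl)
end
end

section
/- Let ρ be an atomless probability measure on ℝ³ with finite minimal Coulomb cost, and suppose there exists a bounded Kantorovich potential u (a bounded maximizer of the dual problem). Then there exists α > 0 such that every minimizer P of the Coulomb multimarginal problem satisfies P(D_α) = 0, where D_α = {(x₁,…,x_N) : |xᵢ−x_j| ≤ α for some i ≠ j}. In particular, the bound follows because u(x₁)+⋯+u(x_N) = c(x₁,…,x_N) P-a.e. -/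
open MeasureTheory Filter Topology
open scoped ENNReal

noncomputable section

open Metric Set

section Helpers

lemma null_small_balls (ρ : Measure E3) [IsProbabilityMeasure ρ] {r : ℝ} (hr : 0 < r) :
    ρ {y | ρ (closedBall y r) = 0} = 0 := by
  obtain ⟨d, hd⟩ := TopologicalSpace.exists_dense_seq E3
  refine measure_mono_null (t := ⋃ k : ℕ,
    if ρ (closedBall (d k) (r / 2)) = 0 then closedBall (d k) (r / 2) else ∅) ?_ ?_
  · intro y hy
    obtain ⟨k, hk⟩ := hd.exists_dist_lt y (half_pos hr)
    have hsub : closedBall (d k) (r / 2) ⊆ closedBall y r := by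
      intro z hz
      have h0 : dist z y ≤ dist z (d k) + dist (d k) y := dist_triangle _ _ _
      have h1 : dist z (d k) ≤ r / 2 := hz
      have h2 : dist (d k) y < r / 2 := by rw [dist_comm]; exact hk
      simp only [mem_closedBall]; linarith
    have h0 : ρ (closedBall (d k) (r / 2)) = 0 := measure_mono_null hsub hy
    refine mem_iUnion.2 ⟨k, ?_⟩
    rw [if_pos h0]
    exact mem_closedBall.2 hk.le
  · refine measure_iUnion_null fun k => ?_
    split_ifs with h
    · exact h
    · exact measure_empty

lemma measurable_ball_measure (ρ : Measure E3) [IsProbabilityMeasure ρ] (r : ℝ) :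
    Measurable fun y => ρ (closedBall y r) := by
  have hmeas : Measurable fun p : E3 × E3 => (if dist p.2 p.1 ≤ r then (1 : ℝ≥0∞) else 0) := by
    refine Measurable.ite ?_ measurable_const measurable_const
    exact (isClosed_le (continuous_dist.comp (continuous_snd.prodMk continuous_fst))
      continuous_const).measurableSet
  have := hmeas.lintegral_prod_right' (ν := ρ)
  convert this using 2 with y
  rw [← lintegral_indicator_one measurableSet_closedBall]
  refine lintegral_congr fun z => ?_
  by_cases h : dist z y ≤ r <;> simp [Set.indicator_apply, mem_closedBall, h]

lemma measurable_ball_integral (ρ : Measure E3) [IsProbabilityMeasure ρ] {u : E3 → ℝ}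
    (hm : Measurable u) (r : ℝ) :
    Measurable fun y => ∫ z in closedBall y r, u z ∂ρ := by
  have hmeas : StronglyMeasurable fun p : E3 × E3 => (if dist p.2 p.1 ≤ r then u p.2 else 0) := by
    refine (Measurable.ite ?_ (hm.comp measurable_snd) measurable_const).stronglyMeasurable
    exact (isClosed_le (continuous_dist.comp (continuous_snd.prodMk continuous_fst))
      continuous_const).measurableSet
  have := hmeas.integral_prod_right' (ν := ρ)
  have heq : (fun y => ∫ z in closedBall y r, u z ∂ρ)
      = fun y => ∫ z, (if dist z y ≤ r then u z else 0) ∂ρ := by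
    ext y
    rw [← integral_indicator measurableSet_closedBall]
    refine integral_congr_ae (Eventually.of_forall fun z => ?_)
    by_cases h : dist z y ≤ r <;> simp [Set.indicator_apply, mem_closedBall, h]
  rw [heq]
  exact this.measurable

lemma measurable_ubar (ρ : Measure E3) [IsProbabilityMeasure ρ] {u : E3 → ℝ}
    (hm : Measurable u) (r : ℝ) :
    Measurable fun y => ⨍ z in closedBall y r, u z ∂ρ := by
  have heq : (fun y => ⨍ z in closedBall y r, u z ∂ρ)
      = fun y => (ρ (closedBall y r)).toReal⁻¹ * ∫ z in closedBall y r, u z ∂ρ := by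
    ext y; rw [setAverage_eq, smul_eq_mul, measureReal_def]
  rw [heq]
  exact (((measurable_ball_measure ρ r).ennreal_toReal).inv).mul
    (measurable_ball_integral ρ hm r)

lemma abs_average_le (ρ : Measure E3) [IsProbabilityMeasure ρ] {u : E3 → ℝ} {M : ℝ}
    (hb : ∀ y, |u y| ≤ M) (s : Set E3) (hM : 0 ≤ M) :
    |⨍ z in s, u z ∂ρ| ≤ M := by
  rcases eq_or_ne (ρ s) 0 with h | h
  · rw [setAverage_eq, Measure.restrict_eq_zero.2 h, integral_zero_measure, smul_zero, abs_zero]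
    exact hM
  · rw [setAverage_eq, smul_eq_mul, measureReal_def, abs_mul, abs_inv, abs_of_nonneg ENNReal.toReal_nonneg]
    have hJ : ‖∫ z in s, u z ∂ρ‖ ≤ M * ((ρ.restrict s) Set.univ).toReal :=
      norm_integral_le_of_norm_le_const (Eventually.of_forall fun z => by
        rw [Real.norm_eq_abs]; exact hb z)
    rw [Measure.restrict_apply_univ, Real.norm_eq_abs] at hJ
    have hc : 0 < (ρ s).toReal := ENNReal.toReal_pos h (measure_ne_top _ _)
    calc (ρ s).toReal⁻¹ * |∫ z in s, u z ∂ρ|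
        ≤ (ρ s).toReal⁻¹ * (M * (ρ s).toReal) :=
          mul_le_mul_of_nonneg_left hJ (inv_nonneg.2 hc.le)
      _ = M := by field_simp

lemma ofReal_integral_le {α : Type*} [MeasurableSpace α] {μ : Measure α} {f : α → ℝ}
    (hf : Integrable f μ) :
    ENNReal.ofReal (∫ x, f x ∂μ) ≤ ∫⁻ x, ENNReal.ofReal (f x) ∂μ := by
  have h1 : ENNReal.ofReal (∫ x, f x ∂μ) ≤ ENNReal.ofReal (∫ x, max (f x) 0 ∂μ) :=
    ENNReal.ofReal_le_ofReal (integral_mono hf hf.pos_part fun x => le_max_left _ _)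
  refine h1.trans_eq ?_
  rw [ofReal_integral_eq_lintegral_ofReal hf.pos_part
    (Eventually.of_forall fun x => le_max_right _ _)]
  refine lintegral_congr fun x => ?_
  rcases le_total (f x) 0 with h | h
  · rw [max_eq_right h, ENNReal.ofReal_zero, ENNReal.ofReal_eq_zero.2 h]
  · rw [max_eq_left h]

lemma map_eval_restrict_pi (N : ℕ) (ρ : Measure E3) [IsProbabilityMeasure ρ]
    (B : Fin N → Set E3) (i : Fin N) :
    ((Measure.pi fun _ : Fin N => ρ).restrict (Set.pi Set.univ B)).map (fun z => z i)
      = (∏ k ∈ Finset.univ.erase i, ρ (B k)) • ρ.restrict (B i) := by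
  ext s hs
  rw [Measure.map_apply (measurable_pi_apply i) hs,
    Measure.restrict_apply (measurable_pi_apply i hs), Measure.smul_apply,
    Measure.restrict_apply hs, smul_eq_mul]
  have hset : ((fun z : Fin N → E3 => z i) ⁻¹' s) ∩ Set.pi Set.univ B
      = Set.pi Set.univ (Function.update B i (s ∩ B i)) := by
    ext z
    simp only [Set.mem_inter_iff, Set.mem_preimage, Set.mem_pi, Set.mem_univ, true_implies]
    constructor
    · rintro ⟨h1, h2⟩ k
      rcases eq_or_ne k i with rfl | hk
      · rw [Function.update_self]; exact ⟨h1, h2 k⟩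
      · rw [Function.update_of_ne hk]; exact h2 k
    · intro h
      have hi := h i
      rw [Function.update_self] at hi
      refine ⟨hi.1, fun k => ?_⟩
      rcases eq_or_ne k i with rfl | hk
      · exact hi.2
      · have := h k; rwa [Function.update_of_ne hk] at this
  rw [hset, Measure.pi_pi]
  have hfun : ∀ k : Fin N, ρ (Function.update B i (s ∩ B i) k)
      = Function.update (fun k => ρ (B k)) i (ρ (s ∩ B i)) k := by
    intro k
    rcases eq_or_ne k i with rfl | hk
    · rw [Function.update_self, Function.update_self]
    · rw [Function.update_of_ne hk, Function.update_of_ne hk]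
  rw [Finset.prod_congr rfl fun k _ => hfun k,
    Finset.prod_update_of_mem (Finset.mem_univ i), mul_comm,
    Finset.sdiff_singleton_eq_erase]

lemma feas_bound (N : ℕ) (ρ : Measure E3) [IsProbabilityMeasure ρ] (u₁ : E3 → ℝ)
    (hm : Measurable u₁) (M : ℝ) (hbd : ∀ y, |u₁ y| ≤ M)
    (hfeas₁ : ∀ᵐ z ∂(Measure.pi fun _ : Fin N => ρ),
      ENNReal.ofReal (∑ i, u₁ (z i)) ≤ coulomb N z)
    {r α : ℝ} (hr : 0 < r) (hrα : 8 * r ≤ α)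
    (x : Fin N → E3) (hsep : ∀ i j, i ≠ j → α < dist (x i) (x j))
    (hpos : ∀ i, 0 < ρ (closedBall (x i) r)) :
    ∑ i, (⨍ z in closedBall (x i) r, u₁ z ∂ρ) ≤
      (∑ p ∈ Finset.univ.filter (fun p : Fin N × Fin N => p.1 < p.2),
        (dist (x p.1) (x p.2))⁻¹)
      + (Finset.univ.filter (fun p : Fin N × Fin N => p.1 < p.2)).card * (3 * r / α ^ 2) := by
  classical
  have hα : 0 < α := lt_of_lt_of_le (by positivity) hrα
  set pairs := Finset.univ.filter (fun p : Fin N × Fin N => p.1 < p.2) with hpairs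
  set B : Fin N → Set E3 := fun i => closedBall (x i) r with hBdef
  have hBm : ∀ i, MeasurableSet (B i) := fun i => measurableSet_closedBall
  set U : Set (Fin N → E3) := Set.pi Set.univ B with hUdef
  have hUm : MeasurableSet U := MeasurableSet.univ_pi hBm
  set K : ℝ := ∑ p ∈ pairs, (dist (x p.1) (x p.2) - 2 * r)⁻¹ with hKdef
  have hdp : ∀ p ∈ pairs, α < dist (x p.1) (x p.2) := fun p hp =>
    hsep _ _ (Finset.mem_filter.1 hp).2.ne
  have hterm0 : ∀ p ∈ pairs, (0:ℝ) ≤ (dist (x p.1) (x p.2) - 2 * r)⁻¹ := by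
    intro p hp
    have h1 := hdp p hp
    have : 0 < dist (x p.1) (x p.2) - 2 * r := by linarith
    positivity
  have hK0 : 0 ≤ K := Finset.sum_nonneg hterm0
  have step1 : ∀ z ∈ U, coulomb N z ≤ ENNReal.ofReal K := by
    intro z hz
    have hzB : ∀ i, dist (z i) (x i) ≤ r := fun i => mem_closedBall.1 (hz i (mem_univ i))
    rw [coulomb, hKdef, ENNReal.ofReal_sum_of_nonneg hterm0]
    refine Finset.sum_le_sum fun p hp => ?_
    have hd := hdp p hp
    have hpos2 : 0 < dist (x p.1) (x p.2) - 2 * r := by linarith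
    have hdz : dist (x p.1) (x p.2) - 2 * r ≤ dist (z p.1) (z p.2) := by
      have h4 := dist_triangle4 (x p.1) (z p.1) (z p.2) (x p.2)
      have h1 : dist (x p.1) (z p.1) ≤ r := by rw [dist_comm]; exact hzB p.1
      have h2 : dist (z p.2) (x p.2) ≤ r := hzB p.2
      linarith
    rw [ENNReal.ofReal_inv_of_pos hpos2]
    exact ENNReal.inv_le_inv' (ENNReal.ofReal_le_ofReal hdz)
  have step2 : K ≤ (∑ p ∈ pairs, (dist (x p.1) (x p.2))⁻¹)
      + pairs.card * (3 * r / α ^ 2) := by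
    have hle : ∀ p ∈ pairs, (dist (x p.1) (x p.2) - 2 * r)⁻¹
        ≤ (dist (x p.1) (x p.2))⁻¹ + 3 * r / α ^ 2 := by
      intro p hp
      set d := dist (x p.1) (x p.2) with hd
      have hda := hdp p hp
      have h1 : 0 < d - 2 * r := by linarith
      have hd0 : 0 < d := lt_trans hα hda
      have h2 : (d - 2*r)⁻¹ - d⁻¹ = (d - (d - 2*r)) / ((d - 2*r)*d) :=
        inv_sub_inv h1.ne' hd0.ne'
      have h5 : (3/4*α)*α ≤ (d-2*r)*d :=
        mul_le_mul (by linarith) hda.le hα.le (by linarith)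
      have h3 : (d - (d - 2*r)) / ((d-2*r)*d) ≤ 3*r/α^2 := by
        rw [div_le_div_iff₀ (by positivity) (by positivity)]
        nlinarith [mul_le_mul_of_nonneg_left h5 (by linarith : (0:ℝ) ≤ 3*r)]
      linarith
    calc K ≤ ∑ p ∈ pairs, ((dist (x p.1) (x p.2))⁻¹ + 3 * r / α ^ 2) :=
          Finset.sum_le_sum hle
      _ = _ := by rw [Finset.sum_add_distrib, Finset.sum_const, nsmul_eq_mul]
  set m := (Measure.pi fun _ : Fin N => ρ).restrict U with hmdef
  have hfint : ∀ i : Fin N, Integrable (fun z : Fin N → E3 => u₁ (z i)) m := fun i =>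
    Integrable.mono' (integrable_const M)
      ((hm.comp (measurable_pi_apply i)).aestronglyMeasurable)
      (Eventually.of_forall fun z => hbd (z i))
  have hae : ∀ᵐ z ∂m, (∑ i, u₁ (z i)) ≤ K := by
    filter_upwards [ae_restrict_of_ae hfeas₁, ae_restrict_mem hUm] with z h1 h2
    exact (ENNReal.ofReal_le_ofReal_iff hK0).1 (h1.trans (step1 z h2))
  have hint : ∫ z, (∑ i, u₁ (z i)) ∂m ≤ K * ((Measure.pi fun _ : Fin N => ρ) U).toReal := by
    have h := integral_mono_ae (integrable_finset_sum _ fun i _ => hfint i)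
      (integrable_const K) hae
    rwa [integral_const, hmdef, measureReal_def, Measure.restrict_apply_univ, smul_eq_mul, mul_comm] at h
  have hintL : ∫ z, (∑ i, u₁ (z i)) ∂m
      = ∑ i, (∏ k ∈ Finset.univ.erase i, ρ (B k)).toReal * ∫ z in B i, u₁ z ∂ρ := by
    rw [integral_finset_sum _ fun i _ => hfint i]
    refine Finset.sum_congr rfl fun i _ => ?_
    have hmap := map_eval_restrict_pi N ρ B i
    have h1 : ∫ z, u₁ (z i) ∂m = ∫ y, u₁ y ∂(m.map (fun z => z i)) :=
      (integral_map (measurable_pi_apply i).aemeasurable hm.aestronglyMeasurable).symm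
    rw [h1, hmdef, hmap, integral_smul_measure, smul_eq_mul]
  set c : Fin N → ℝ := fun i => (ρ (B i)).toReal with hcdef
  have hc : ∀ i, 0 < c i := fun i => ENNReal.toReal_pos (hpos i).ne' (measure_ne_top _ _)
  set T : ℝ := ∏ i, c i with hTdef
  have hT : 0 < T := Finset.prod_pos fun i _ => hc i
  have hUval : ((Measure.pi fun _ : Fin N => ρ) U).toReal = T := by
    rw [hUdef, Measure.pi_pi, ENNReal.toReal_prod]
  have herase : ∀ i : Fin N, (∏ k ∈ Finset.univ.erase i, ρ (B k)).toReal
      = T * (c i)⁻¹ := by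
    intro i
    have hmul : (∏ k ∈ Finset.univ.erase i, (ρ (B k)).toReal) * (ρ (B i)).toReal = T :=
      Finset.prod_erase_mul Finset.univ (fun k => (ρ (B k)).toReal) (Finset.mem_univ i)
    have h := eq_div_of_mul_eq (hc i).ne' hmul
    rw [ENNReal.toReal_prod, h, div_eq_mul_inv]
  have havg : ∀ i : Fin N, (⨍ z in closedBall (x i) r, u₁ z ∂ρ)
      = (c i)⁻¹ * ∫ z in B i, u₁ z ∂ρ := by
    intro i
    rw [setAverage_eq, smul_eq_mul, measureReal_def]
  have hkey : T * (∑ i, (c i)⁻¹ * ∫ z in B i, u₁ z ∂ρ) ≤ T * K := by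
    rw [Finset.mul_sum]
    calc ∑ i, T * ((c i)⁻¹ * ∫ z in B i, u₁ z ∂ρ)
        = ∑ i, (∏ k ∈ Finset.univ.erase i, ρ (B k)).toReal * ∫ z in B i, u₁ z ∂ρ := by
          refine Finset.sum_congr rfl fun i _ => ?_
          rw [herase i, mul_assoc]
      _ = ∫ z, (∑ i, u₁ (z i)) ∂m := hintL.symm
      _ ≤ K * ((Measure.pi fun _ : Fin N => ρ) U).toReal := hint
      _ = T * K := by rw [hUval, mul_comm]
  have hfinal : ∑ i, (⨍ z in closedBall (x i) r, u₁ z ∂ρ) ≤ K := by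
    have h := le_of_mul_le_mul_left hkey hT
    calc ∑ i, (⨍ z in closedBall (x i) r, u₁ z ∂ρ)
        = ∑ i, (c i)⁻¹ * ∫ z in B i, u₁ z ∂ρ := Finset.sum_congr rfl fun i _ => havg i
      _ ≤ K := h
  exact hfinal.trans step2

end Helpers

lemma slack_bound (N : ℕ) (ρ : Measure E3) [IsProbabilityMeasure ρ]
    (P : Measure (Fin N → E3)) [IsProbabilityMeasure P]
    (hPm : ∀ i : Fin N, P.map (fun x => x i) = ρ)
    {D : Set (Fin N → E3)} (hDm : MeasurableSet D)
    (v : E3 → ℝ) (hvm : Measurable v) {M θn : ℝ} (hM : 0 < M) (hθn : 0 ≤ θn)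
    (hvb : ∀ y, |v y| ≤ M)
    (hDpt : ∀ x ∈ D, ENNReal.ofReal ((N:ℝ) * M) + ENNReal.ofReal ((N:ℝ) * M)
      ≤ coulomb N x)
    (hptw : ∀ᵐ x ∂P, x ∉ D →
      ENNReal.ofReal (∑ i, v (x i)) ≤ coulomb N x + ENNReal.ofReal θn)
    {I : ℝ} (hPc : ∫⁻ x, coulomb N x ∂P = ENNReal.ofReal ((N:ℝ) * I)) :
    ENNReal.ofReal ((N:ℝ) * M) * P D
      ≤ ENNReal.ofReal (θn + (N:ℝ) * |I - ∫ y, v y ∂ρ|) := by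
  set In : ℝ := ∫ y, v y ∂ρ with hIn
  set g : (Fin N → E3) → ℝ≥0∞ := fun x => ENNReal.ofReal (∑ i, v (x i)) with hg
  have hNpos : (0:ℝ) ≤ N := Nat.cast_nonneg N
  have hDbound : ∫⁻ x in D, g x ∂P ≤ ENNReal.ofReal ((N:ℝ) * M) * P D := by
    have hpt : ∀ x : Fin N → E3, g x ≤ ENNReal.ofReal ((N:ℝ) * M) := by
      intro x
      refine ENNReal.ofReal_le_ofReal ?_
      calc ∑ i, v (x i) ≤ ∑ _i : Fin N, M :=
            Finset.sum_le_sum fun i _ => (abs_le.1 (hvb (x i))).2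
        _ = (N:ℝ) * M := by
            rw [Finset.sum_const, Finset.card_univ, Fintype.card_fin, nsmul_eq_mul]
    calc ∫⁻ x in D, g x ∂P ≤ ∫⁻ _x in D, ENNReal.ofReal ((N:ℝ) * M) ∂P :=
          lintegral_mono fun x => hpt x
      _ = ENNReal.ofReal ((N:ℝ) * M) * P D := by rw [setLIntegral_const]
  have hDc : (ENNReal.ofReal ((N:ℝ) * M) + ENNReal.ofReal ((N:ℝ) * M)) * P D
      ≤ ∫⁻ x in D, coulomb N x ∂P := by
    calc (ENNReal.ofReal ((N:ℝ) * M) + ENNReal.ofReal ((N:ℝ) * M)) * P D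
        = ∫⁻ _x in D, (ENNReal.ofReal ((N:ℝ) * M) + ENNReal.ofReal ((N:ℝ) * M)) ∂P := by
          rw [setLIntegral_const]
      _ ≤ ∫⁻ x in D, coulomb N x ∂P := by
          refine lintegral_mono_ae ?_
          filter_upwards [ae_restrict_mem hDm] with x hx
          exact hDpt x hx
  have hDcomp : ∫⁻ x in Dᶜ, g x ∂P
      ≤ ∫⁻ x in Dᶜ, coulomb N x ∂P + ENNReal.ofReal θn := by
    calc ∫⁻ x in Dᶜ, g x ∂P
        ≤ ∫⁻ x in Dᶜ, (coulomb N x + ENNReal.ofReal θn) ∂P := by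
          refine lintegral_mono_ae ?_
          filter_upwards [ae_restrict_of_ae hptw, ae_restrict_mem hDm.compl]
            with x h1 h2
          exact h1 h2
      _ = ∫⁻ x in Dᶜ, coulomb N x ∂P + ENNReal.ofReal θn * P Dᶜ := by
          rw [lintegral_add_right _ measurable_const, setLIntegral_const]
      _ ≤ ∫⁻ x in Dᶜ, coulomb N x ∂P + ENNReal.ofReal θn * 1 :=
          add_le_add_right (mul_le_mul_right prob_le_one _) _
      _ = ∫⁻ x in Dᶜ, coulomb N x ∂P + ENNReal.ofReal θn := by rw [mul_one]
  have hintg : ∀ i : Fin N, Integrable (fun x : Fin N → E3 => v (x i)) P := fun i =>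
    Integrable.mono' (integrable_const M)
      ((hvm.comp (measurable_pi_apply i)).aestronglyMeasurable)
      (Eventually.of_forall fun x => hvb (x i))
  have hglow : ENNReal.ofReal ((N:ℝ) * In) ≤ ∫⁻ x, g x ∂P := by
    have hval : ∫ x, (∑ i, v (x i)) ∂P = (N:ℝ) * In := by
      rw [integral_finset_sum _ fun i _ => hintg i]
      have hone : ∀ i : Fin N, ∫ x, v (x i) ∂P = In := by
        intro i
        have h1 : ∫ y, v y ∂(P.map (fun x : Fin N → E3 => x i))
            = ∫ x, v (x i) ∂P :=
          integral_map (measurable_pi_apply i).aemeasurable hvm.aestronglyMeasurable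
        rw [← h1, hPm i]
      rw [Finset.sum_congr rfl fun i _ => hone i, Finset.sum_const, Finset.card_univ,
        Fintype.card_fin, nsmul_eq_mul]
    rw [← hval]
    exact ofReal_integral_le (integrable_finset_sum _ fun i _ => hintg i)
  have hchain : ENNReal.ofReal ((N:ℝ) * In)
        + (ENNReal.ofReal ((N:ℝ) * M) + ENNReal.ofReal ((N:ℝ) * M)) * P D
      ≤ ENNReal.ofReal ((N:ℝ) * M) * P D + ENNReal.ofReal θn
        + ENNReal.ofReal ((N:ℝ) * I) := by
    calc ENNReal.ofReal ((N:ℝ) * In)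
          + (ENNReal.ofReal ((N:ℝ) * M) + ENNReal.ofReal ((N:ℝ) * M)) * P D
        ≤ (∫⁻ x, g x ∂P) + ∫⁻ x in D, coulomb N x ∂P := add_le_add hglow hDc
      _ = ((∫⁻ x in D, g x ∂P) + ∫⁻ x in Dᶜ, g x ∂P) + ∫⁻ x in D, coulomb N x ∂P := by
          rw [lintegral_add_compl _ hDm]
      _ ≤ (ENNReal.ofReal ((N:ℝ) * M) * P D
            + (∫⁻ x in Dᶜ, coulomb N x ∂P + ENNReal.ofReal θn))
          + ∫⁻ x in D, coulomb N x ∂P :=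
          add_le_add_left (add_le_add hDbound hDcomp) _
      _ = ENNReal.ofReal ((N:ℝ) * M) * P D + ENNReal.ofReal θn
          + ((∫⁻ x in D, coulomb N x ∂P) + ∫⁻ x in Dᶜ, coulomb N x ∂P) := by
          ring
      _ = ENNReal.ofReal ((N:ℝ) * M) * P D + ENNReal.ofReal θn
          + ENNReal.ofReal ((N:ℝ) * I) := by
          rw [lintegral_add_compl _ hDm, hPc]
  have hIbound : ENNReal.ofReal ((N:ℝ) * I)
      ≤ ENNReal.ofReal ((N:ℝ) * In) + ENNReal.ofReal ((N:ℝ) * |I - In|) := by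
    have h5 : I ≤ In + |I - In| := by
      have := le_abs_self (I - In)
      linarith
    calc ENNReal.ofReal ((N:ℝ) * I)
        ≤ ENNReal.ofReal ((N:ℝ) * In + (N:ℝ) * |I - In|) := by
          refine ENNReal.ofReal_le_ofReal ?_
          calc (N:ℝ) * I ≤ (N:ℝ) * (In + |I - In|) :=
                mul_le_mul_of_nonneg_left h5 hNpos
            _ = (N:ℝ) * In + (N:ℝ) * |I - In| := by ring
      _ ≤ _ := ENNReal.ofReal_add_le
  have h2 : ENNReal.ofReal ((N:ℝ) * In)
        + (ENNReal.ofReal ((N:ℝ) * M) * P D + ENNReal.ofReal ((N:ℝ) * M) * P D)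
      ≤ ENNReal.ofReal ((N:ℝ) * In)
        + (ENNReal.ofReal ((N:ℝ) * M) * P D
          + (ENNReal.ofReal θn + ENNReal.ofReal ((N:ℝ) * |I - In|))) := by
    calc ENNReal.ofReal ((N:ℝ) * In)
          + (ENNReal.ofReal ((N:ℝ) * M) * P D + ENNReal.ofReal ((N:ℝ) * M) * P D)
        = ENNReal.ofReal ((N:ℝ) * In)
          + (ENNReal.ofReal ((N:ℝ) * M) + ENNReal.ofReal ((N:ℝ) * M)) * P D := by
          rw [add_mul]
      _ ≤ ENNReal.ofReal ((N:ℝ) * M) * P D + ENNReal.ofReal θn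
          + ENNReal.ofReal ((N:ℝ) * I) := hchain
      _ ≤ ENNReal.ofReal ((N:ℝ) * M) * P D + ENNReal.ofReal θn
          + (ENNReal.ofReal ((N:ℝ) * In) + ENNReal.ofReal ((N:ℝ) * |I - In|)) :=
          add_le_add_right hIbound _
      _ = ENNReal.ofReal ((N:ℝ) * In)
          + (ENNReal.ofReal ((N:ℝ) * M) * P D
            + (ENNReal.ofReal θn + ENNReal.ofReal ((N:ℝ) * |I - In|))) := by
          ring
  have h3 := (ENNReal.add_le_add_iff_left ENNReal.ofReal_ne_top).1 h2
  have h4 := (ENNReal.add_le_add_iff_left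
    (ENNReal.mul_ne_top ENNReal.ofReal_ne_top (measure_ne_top P D))).1 h3
  calc ENNReal.ofReal ((N:ℝ) * M) * P D
      ≤ ENNReal.ofReal θn + ENNReal.ofReal ((N:ℝ) * |I - In|) := h4
    _ = ENNReal.ofReal (θn + (N:ℝ) * |I - In|) :=
        (ENNReal.ofReal_add hθn (by positivity)).symm


set_option maxHeartbeats 2000000 in
/-- given a bounded Kantorovich potential u whose dual value equals the
minimal Coulomb cost, there is α > 0 such that every minimizer P of the multimarginal
Coulomb problem satisfies P(D_α) = 0. -/
theorem stmt18 (N : ℕ) (hN : 2 ≤ N) (ρ : Measure E3) [IsProbabilityMeasure ρ]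
    (hat : ∀ a : E3, ρ {a} = 0)
    (hfin : ∃ P : Measure (Fin N → E3), IsProbabilityMeasure P ∧
      (∀ i : Fin N, P.map (fun x => x i) = ρ) ∧ ∫⁻ x, coulomb N x ∂P ≠ ⊤)
    (u : E3 → ℝ) (hu : Integrable u ρ) (hb : ∃ M : ℝ, ∀ y, |u y| ≤ M)
    (hfeas : ∀ᵐ x ∂(Measure.pi fun _ : Fin N => ρ),
      ENNReal.ofReal (∑ i, u (x i)) ≤ coulomb N x)
    (hdual : sInf {v : ℝ≥0∞ | ∃ P : Measure (Fin N → E3), IsProbabilityMeasure P ∧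
        (∀ i : Fin N, P.map (fun x => x i) = ρ) ∧ v = ∫⁻ x, coulomb N x ∂P} =
      ENNReal.ofReal ((N : ℝ) * ∫ y, u y ∂ρ)) :
    ∃ α : ℝ, 0 < α ∧ ∀ P : Measure (Fin N → E3), IsProbabilityMeasure P →
      (∀ i : Fin N, P.map (fun x => x i) = ρ) →
      (∀ P' : Measure (Fin N → E3), IsProbabilityMeasure P' →
        (∀ i : Fin N, P'.map (fun x => x i) = ρ) →
        ∫⁻ x, coulomb N x ∂P ≤ ∫⁻ x, coulomb N x ∂P') →
      P {x : Fin N → E3 | ∃ i j : Fin N, i ≠ j ∧ dist (x i) (x j) ≤ α} = 0 := by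
  obtain ⟨M₀, hM₀⟩ := hb
  set M : ℝ := max M₀ 1 with hMdef
  have hM1 : (1:ℝ) ≤ M := le_max_right _ _
  have hMpos : (0:ℝ) < M := lt_of_lt_of_le one_pos hM1
  have hbM : ∀ y, |u y| ≤ M := fun y => (hM₀ y).trans (le_max_left _ _)
  set u₁ : E3 → ℝ := fun y => max (min (hu.1.mk u y) M) (-M) with hu₁def
  have hu₁m : Measurable u₁ :=
    ((hu.1.measurable_mk.min measurable_const).max measurable_const)
  have hu₁e : u =ᵐ[ρ] u₁ := by
    filter_upwards [hu.1.ae_eq_mk] with y hy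
    have h1 := abs_le.1 (hbM y)
    rw [hu₁def]
    simp only [← hy]
    rw [min_eq_left h1.2, max_eq_left h1.1]
  have hu₁b : ∀ y, |u₁ y| ≤ M := by
    intro y
    rw [abs_le]
    refine ⟨le_max_right _ _, max_le ((min_le_right _ _)) (by linarith)⟩
  have hu₁int : Integrable u₁ ρ := hu.congr hu₁e
  set I : ℝ := ∫ y, u y ∂ρ with hIdef
  have hI₁ : ∫ y, u₁ y ∂ρ = I := (integral_congr_ae hu₁e).symm
  -- transfer the a.e. feasibility to u₁
  have hfeas₁ : ∀ᵐ z ∂(Measure.pi fun _ : Fin N => ρ),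
      ENNReal.ofReal (∑ i, u₁ (z i)) ≤ coulomb N z := by
    set T : Set E3 := toMeasurable ρ {y | ¬ u y = u₁ y} with hT
    have hnull : ρ T = 0 := by
      rw [hT, measure_toMeasurable]
      exact ae_iff.1 hu₁e
    have hall : ∀ᵐ z ∂(Measure.pi fun _ : Fin N => ρ), ∀ i, z i ∉ T := by
      rw [ae_all_iff]
      intro i
      rw [ae_iff]
      have hset : {z : Fin N → E3 | ¬ z i ∉ T} = (fun z : Fin N → E3 => z i) ⁻¹' T := by
        ext z; simp
      rw [hset]
      exact Measure.pi_eval_preimage_null _ hnull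
    filter_upwards [hfeas, hall] with z h1 h2
    have heq : ∑ i, u₁ (z i) = ∑ i, u (z i) := by
      refine Finset.sum_congr rfl fun i _ => ?_
      have hni := h2 i
      have : ¬ ¬ u (z i) = u₁ (z i) := fun hne =>
        hni (subset_toMeasurable ρ _ hne)
      rw [not_not.1 this]
    rw [heq]
    exact h1
  -- the separation scale
  have hNpos : (0:ℝ) < N := by
    have : 0 < N := by omega
    exact_mod_cast this
  have hNM : (0:ℝ) < N * M := mul_pos hNpos hMpos
  set α : ℝ := (2 * (N * M))⁻¹ with hαdef
  have hα : 0 < α := by rw [hαdef]; positivity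
  refine ⟨α, hα, ?_⟩
  intro P hP hPm hmin
  set D := {x : Fin N → E3 | ∃ i j : Fin N, i ≠ j ∧ dist (x i) (x j) ≤ α} with hDdef
  have hDm : MeasurableSet D := by
    have hD2 : D = ⋃ i, ⋃ j, ⋃ (_ : i ≠ j), {x : Fin N → E3 | dist (x i) (x j) ≤ α} := by
      ext x
      simp [hDdef]
    rw [hD2]
    refine MeasurableSet.iUnion fun i => MeasurableSet.iUnion fun j =>
      MeasurableSet.iUnion fun _ => ?_
    exact (isClosed_le (Continuous.dist (continuous_apply i) (continuous_apply j))
      continuous_const).measurableSet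
  have hPc : ∫⁻ x, coulomb N x ∂P = ENNReal.ofReal ((N:ℝ) * I) := by
    rw [← hdual]
    refine le_antisymm (le_sInf ?_) (sInf_le ⟨P, hP, hPm, rfl⟩)
    rintro v ⟨P', hP', hPm', rfl⟩
    exact hmin P' hP' hPm'
  -- the shrinking radii
  set rs : ℕ → ℝ := fun n => α / 8 / (n + 1) with hrs
  have hrspos : ∀ n, 0 < rs n := fun n => by rw [hrs]; positivity
  have hrsle : ∀ n, 8 * rs n ≤ α := by
    intro n
    have h1 : rs n ≤ α / 8 := by
      rw [hrs]
      refine div_le_self (by positivity) (by exact_mod_cast Nat.le_add_left 1 n)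
    linarith
  have hrs0 : Tendsto rs atTop (𝓝[>] (0:ℝ)) := by
    rw [tendsto_nhdsWithin_iff]
    constructor
    · have h1 : Tendsto (fun n : ℕ => 1 / ((n:ℝ) + 1)) atTop (𝓝 0) :=
        tendsto_one_div_add_atTop_nhds_zero_nat
      have h2 : rs = fun n : ℕ => (α / 8) * (1 / ((n:ℝ) + 1)) := by
        ext n; rw [hrs]; ring
      rw [h2]
      simpa using h1.const_mul (α / 8)
    · exact Eventually.of_forall fun n => hrspos n
  set ub : ℕ → E3 → ℝ := fun n y => ⨍ z in closedBall y (rs n), u₁ z ∂ρ with hub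
  have hubm : ∀ n, Measurable (ub n) := fun n => measurable_ubar ρ hu₁m (rs n)
  have hubb : ∀ n y, |ub n y| ≤ M := fun n y => abs_average_le ρ hu₁b _ hMpos.le
  set In : ℕ → ℝ := fun n => ∫ y, ub n y ∂ρ with hIn
  have hInlim : Tendsto In atTop (𝓝 I) := by
    rw [← hI₁]
    refine tendsto_integral_of_dominated_convergence (fun _ => M)
      (fun n => (hubm n).aestronglyMeasurable) (integrable_const M)
      (fun n => Eventually.of_forall fun y => by
        rw [Real.norm_eq_abs]; exact hubb n y) ?_
    filter_upwards [(Besicovitch.vitaliFamily ρ).ae_tendsto_average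
      hu₁int.locallyIntegrable] with y hy
    exact hy.comp ((Besicovitch.tendsto_filterAt ρ y).comp hrs0)
  set θ : ℕ → ℝ := fun n =>
    ((Finset.univ.filter (fun p : Fin N × Fin N => p.1 < p.2)).card : ℝ)
      * (3 * rs n / α ^ 2) with hθ
  have hθ0 : ∀ n, 0 ≤ θ n := fun n => by
    rw [hθ]
    have := (hrspos n).le
    positivity
  have hθlim : Tendsto θ atTop (𝓝 0) := by
    have hrs0n : Tendsto rs atTop (𝓝 0) := hrs0.mono_right nhdsWithin_le_nhds
    have h2 : θ = fun n =>
        (((Finset.univ.filter (fun p : Fin N × Fin N => p.1 < p.2)).card : ℝ) * 3 / α ^ 2)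
          * rs n := by
      ext n; rw [hθ]; ring
    rw [h2]
    simpa using hrs0n.const_mul _
  -- a.e. the coordinate balls have positive measure
  have hgood : ∀ n, ∀ᵐ x ∂P, ∀ i, 0 < ρ (closedBall (x i) (rs n)) := by
    intro n
    rw [ae_all_iff]
    intro i
    have hAm : MeasurableSet {y : E3 | ρ (closedBall y (rs n)) = 0} :=
      (measurable_ball_measure ρ (rs n)) (measurableSet_singleton 0)
    rw [ae_iff]
    have hset : {x : Fin N → E3 | ¬ 0 < ρ (closedBall (x i) (rs n))}
        = (fun x : Fin N → E3 => x i) ⁻¹' {y : E3 | ρ (closedBall y (rs n)) = 0} := by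
      ext x
      simp [pos_iff_ne_zero]
    rw [hset, ← Measure.map_apply (measurable_pi_apply i) hAm, hPm i]
    exact null_small_balls ρ (hrspos n)
  -- pointwise dual bound off the diagonal set D
  have hptw : ∀ n, ∀ᵐ x ∂P, x ∉ D →
      ENNReal.ofReal (∑ i, ub n (x i)) ≤ coulomb N x + ENNReal.ofReal (θ n) := by
    intro n
    filter_upwards [hgood n] with x hx hxD
    have hsep : ∀ i j : Fin N, i ≠ j → α < dist (x i) (x j) := by
      intro i j hij
      by_contra hcon
      push_neg at hcon
      exact hxD ⟨i, j, hij, hcon⟩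
    have h1 := feas_bound N ρ u₁ hu₁m M hu₁b hfeas₁ (hrspos n) (hrsle n) x hsep hx
    have hS : coulomb N x = ENNReal.ofReal
        (∑ p ∈ Finset.univ.filter (fun p : Fin N × Fin N => p.1 < p.2),
          (dist (x p.1) (x p.2))⁻¹) := by
      rw [coulomb, ENNReal.ofReal_sum_of_nonneg (fun p _ => inv_nonneg.2 dist_nonneg)]
      refine Finset.sum_congr rfl fun p hp => ?_
      have hd : α < dist (x p.1) (x p.2) := hsep _ _ (Finset.mem_filter.1 hp).2.ne
      rw [ENNReal.ofReal_inv_of_pos (lt_trans hα hd)]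
    calc ENNReal.ofReal (∑ i, ub n (x i))
        ≤ ENNReal.ofReal
          ((∑ p ∈ Finset.univ.filter (fun p : Fin N × Fin N => p.1 < p.2),
            (dist (x p.1) (x p.2))⁻¹) + θ n) := ENNReal.ofReal_le_ofReal (by
              rw [hθ]; exact h1)
      _ ≤ ENNReal.ofReal
          (∑ p ∈ Finset.univ.filter (fun p : Fin N × Fin N => p.1 < p.2),
            (dist (x p.1) (x p.2))⁻¹) + ENNReal.ofReal (θ n) := ENNReal.ofReal_add_le
      _ = coulomb N x + ENNReal.ofReal (θ n) := by rw [hS]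
  -- the pointwise Coulomb lower bound on D
  have hDpt : ∀ x ∈ D, ENNReal.ofReal ((N:ℝ) * M) + ENNReal.ofReal ((N:ℝ) * M)
      ≤ coulomb N x := by
    intro x hxD
    obtain ⟨i, j, hij, hd⟩ := hxD
    have hsplit : ENNReal.ofReal ((N:ℝ) * M) + ENNReal.ofReal ((N:ℝ) * M)
        = ENNReal.ofReal α⁻¹ := by
      rw [hαdef, inv_inv, two_mul, ENNReal.ofReal_add hNM.le hNM.le]
    rw [hsplit]
    have key : ∀ a b : Fin N, a < b → dist (x a) (x b) ≤ α →
        ENNReal.ofReal α⁻¹ ≤ coulomb N x := by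
      intro a b hab hdist
      have hmem : (a, b) ∈ Finset.univ.filter
          (fun p : Fin N × Fin N => p.1 < p.2) :=
        Finset.mem_filter.2 ⟨Finset.mem_univ _, hab⟩
      have hterm : ENNReal.ofReal α⁻¹ ≤ (ENNReal.ofReal (dist (x a) (x b)))⁻¹ := by
        rw [ENNReal.ofReal_inv_of_pos hα]
        exact ENNReal.inv_le_inv' (ENNReal.ofReal_le_ofReal hdist)
      refine hterm.trans ?_
      rw [coulomb]
      have hsub : {(a, b)} ⊆ Finset.univ.filter (fun p : Fin N × Fin N => p.1 < p.2) :=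
        Finset.singleton_subset_iff.2 hmem
      have hs := Finset.sum_le_sum_of_subset (f := fun p : Fin N × Fin N =>
        (ENNReal.ofReal (dist (x p.1) (x p.2)))⁻¹) hsub
      rw [Finset.sum_singleton] at hs
      exact hs
    rcases hij.lt_or_gt with hlt | hlt
    · exact key i j hlt hd
    · exact key j i hlt (by rwa [dist_comm])
  -- the per-n estimate
  have hmain : ∀ n, ENNReal.ofReal ((N:ℝ) * M) * P D
      ≤ ENNReal.ofReal (θ n + (N:ℝ) * |I - In n|) := by
    intro n
    have h := slack_bound N ρ P hPm hDm (ub n) (hubm n) hMpos (hθ0 n)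
      (fun y => hubb n y) hDpt (hptw n) hPc
    simpa only [hIn] using h
  -- take the limit in n
  have hlim : Tendsto (fun n => ENNReal.ofReal (θ n + (N:ℝ) * |I - In n|)) atTop (𝓝 0) := by
    have habs : Tendsto (fun n => (N:ℝ) * |I - In n|) atTop (𝓝 0) := by
      have h1 : Tendsto (fun n => I - In n) atTop (𝓝 0) := by
        have hc : Tendsto (fun _ : ℕ => I) atTop (𝓝 I) := tendsto_const_nhds
        simpa using hc.sub hInlim
      have h2 := h1.abs
      rw [abs_zero] at h2
      simpa using h2.const_mul (N:ℝ)
    have h1 : Tendsto (fun n => θ n + (N:ℝ) * |I - In n|) atTop (𝓝 0) := by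
      simpa using hθlim.add habs
    have h2 := (ENNReal.continuous_ofReal.tendsto 0).comp h1
    simpa [Function.comp_def] using h2
  have hfin2 : ENNReal.ofReal ((N:ℝ) * M) * P D ≤ 0 := ge_of_tendsto' hlim hmain
  have hzero : ENNReal.ofReal ((N:ℝ) * M) * P D = 0 := le_antisymm hfin2 zero_le
  rcases mul_eq_zero.1 hzero with h | h
  · exfalso
    rw [ENNReal.ofReal_eq_zero] at h
    linarith
  · exact h
end
end
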